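/- arXiv:2505.16443 — 7 statements merged into one kernel-verified Lean document; each statement's English description precedes it below -/
import Mathlib

section
/- Let X be a real Banach space, T > 0, J = [0,T], and let W and P be bounded linear operators on X, g : J → X continuous and v ∈ X. Suppose u : J → X is differentiable with u'(t) = −u(t) + W u(t) + g(t) and u(0) = v, and u_n : J → X is differentiable with u_n'(t) = P(−u_n(t) + W u_n(t) + g(t)), u_n(0) = P v, and P u_n(t) = u_n(t) for all t ∈ J. Then sup_{t∈J} ‖u(t) − u_n(t)‖_X ≤ e^{T‖P∘W‖} · sup_{t∈J} ‖u(t) − P u(t)‖_X, where ‖P∘W‖ is the operator norm of the composition P∘W. -/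
open Set

/-- Error bound for the projected linear neural field equation:
if `u' = -u + Wu + g`, `u(0) = v`, and `uₙ' = P(-uₙ + Wuₙ + g)`, `uₙ(0) = Pv`,
with `P uₙ(t) = uₙ(t)` on `J = [0,T]`, then
`sup_{t∈J} ‖u(t) − uₙ(t)‖ ≤ e^{T‖P∘W‖} · sup_{t∈J} ‖u(t) − P u(t)‖`. -/
theorem projected_solution_error_bound
    {X : Type*} [NormedAddCommGroup X] [NormedSpace ℝ X]
    (T : ℝ) (hT : 0 < T)
    (W P : X →L[ℝ] X) (g : ℝ → X) (hg : ContinuousOn g (Icc 0 T)) (v : X)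
    (u un : ℝ → X)
    (hu : ∀ t ∈ Icc (0 : ℝ) T, HasDerivAt u (-u t + W (u t) + g t) t)
    (hu0 : u 0 = v)
    (hun : ∀ t ∈ Icc (0 : ℝ) T, HasDerivAt un (P (-un t + W (un t) + g t)) t)
    (hun0 : un 0 = P v)
    (hPun : ∀ t ∈ Icc (0 : ℝ) T, P (un t) = un t) :
    (⨆ t : Icc (0 : ℝ) T, ‖u t - un t‖) ≤
      Real.exp (T * ‖P.comp W‖) * ⨆ t : Icc (0 : ℝ) T, ‖u t - P (u t)‖ := by
  set K := ‖P.comp W‖ with hKdef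
  have hK : 0 ≤ K := norm_nonneg _
  set M := ⨆ t : Icc (0 : ℝ) T, ‖u t - P (u t)‖ with hMdef
  have h0T : (0 : ℝ) ∈ Icc (0 : ℝ) T := ⟨le_refl 0, hT.le⟩
  -- continuity
  have hu_cont : ContinuousOn u (Icc 0 T) :=
    fun t ht => (hu t ht).continuousAt.continuousWithinAt
  have hun_cont : ContinuousOn un (Icc 0 T) :=
    fun t ht => (hun t ht).continuousAt.continuousWithinAt
  have hd_cont : ContinuousOn (fun t => ‖u t - P (u t)‖) (Icc 0 T) :=
    (hu_cont.sub (P.continuous.comp_continuousOn hu_cont)).norm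
  have hrange : (Set.range fun t : Icc (0 : ℝ) T => ‖u ↑t - P (u ↑t)‖)
      = (fun t => ‖u t - P (u t)‖) '' Icc 0 T := by
    ext x
    simp [Set.mem_image, Subtype.exists]
  have hbdd : BddAbove (Set.range fun t : Icc (0 : ℝ) T => ‖u ↑t - P (u ↑t)‖) := by
    rw [hrange]
    exact isCompact_Icc.bddAbove_image hd_cont
  have hM : ∀ t ∈ Icc (0 : ℝ) T, ‖u t - P (u t)‖ ≤ M := by
    intro t ht
    exact le_ciSup hbdd ⟨t, ht⟩
  have hM0 : 0 ≤ M := le_trans (norm_nonneg _) (hM 0 h0T)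
  -- the projected difference
  set w : ℝ → X := fun t => P (u t) - un t with hwdef
  set h : ℝ → X := fun t => Real.exp t • w t with hhdef
  have hw_cont : ContinuousOn w (Icc 0 T) :=
    (P.continuous.comp_continuousOn hu_cont).sub hun_cont
  have hh_cont : ContinuousOn h (Icc 0 T) :=
    Real.continuous_exp.continuousOn.smul hw_cont
  have hw0 : w 0 = 0 := by simp [hwdef, hu0, hun0]
  have hh0 : h 0 = 0 := by simp [hhdef, hw0]
  -- derivative of h
  have hh' : ∀ t ∈ Icc (0 : ℝ) T,
      HasDerivAt h (Real.exp t • ((P.comp W) (u t - un t))) t := by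
    intro t ht
    have hw' : HasDerivAt w (P (-u t + W (u t) + g t) - P (-un t + W (un t) + g t)) t :=
      (P.hasFDerivAt.comp_hasDerivAt t (hu t ht)).sub (hun t ht)
    have := (Real.hasDerivAt_exp t).smul hw'
    convert this using 1
    · funext s; simp [hhdef]
    rw [← smul_add]
    congr 1
    have hP := hPun t ht
    simp only [hwdef, map_add, map_neg, map_sub, ContinuousLinearMap.comp_apply]
    rw [hP]
    abel
  -- Gronwall-type estimate with slack ε
  have key : ∀ ε > (0:ℝ), ∀ t ∈ Icc (0:ℝ) T,
      ‖h t‖ ≤ M * (Real.exp ((K+1)*t) - Real.exp t) + ε * Real.exp ((K+1)*t) := by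
    intro ε hε
    set B : ℝ → ℝ := fun t => M * (Real.exp ((K+1)*t) - Real.exp t) + ε * Real.exp ((K+1)*t)
      with hBdef
    set B' : ℝ → ℝ := fun t =>
        M * ((K+1) * Real.exp ((K+1)*t) - Real.exp t) + ε * ((K+1) * Real.exp ((K+1)*t))
      with hB'def
    have hB : ∀ x, HasDerivAt B (B' x) x := by
      intro x
      have he : HasDerivAt (fun t => Real.exp ((K+1)*t)) ((K+1) * Real.exp ((K+1)*x)) x := by
        simpa [mul_comm] using ((hasDerivAt_id x).const_mul (K+1)).exp
      exact ((he.sub (Real.hasDerivAt_exp x)).const_mul M).add (he.const_mul ε)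
    have ha : ‖h 0‖ ≤ B 0 := by
      simp [hh0, hBdef]
      positivity
    have bound : ∀ x ∈ Ico (0:ℝ) T, ‖h x‖ = B x →
        ‖Real.exp x • ((P.comp W) (u x - un x))‖ < B' x := by
      intro x hx hfx
      have hxIcc : x ∈ Icc (0:ℝ) T := ⟨hx.1, hx.2.le⟩
      have hze : ‖(P.comp W) (u x - un x)‖ ≤ K * ‖u x - un x‖ :=
        (P.comp W).le_opNorm _
      have hsplit : u x - un x = (u x - P (u x)) + w x := by
        simp only [hwdef]; abel
      have hun_le : ‖u x - un x‖ ≤ M + ‖w x‖ := by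
        rw [hsplit]
        exact le_trans (norm_add_le _ _) (add_le_add_left (hM x hxIcc) _)
      have hnorm : ‖Real.exp x • ((P.comp W) (u x - un x))‖
          = Real.exp x * ‖(P.comp W) (u x - un x)‖ := by
        rw [norm_smul, Real.norm_eq_abs, abs_of_pos (Real.exp_pos x)]
      have hhx : Real.exp x * ‖w x‖ = B x := by
        rw [← hfx, hhdef]
        rw [norm_smul, Real.norm_eq_abs, abs_of_pos (Real.exp_pos x)]
      have hEe : Real.exp x ≤ Real.exp ((K+1)*x) := by
        apply Real.exp_le_exp.2
        nlinarith [hx.1]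
      have hle : ‖Real.exp x • ((P.comp W) (u x - un x))‖
          ≤ Real.exp x * (K * (M + ‖w x‖)) := by
        rw [hnorm]
        exact mul_le_mul_of_nonneg_left
          (le_trans hze (mul_le_mul_of_nonneg_left hun_le hK)) (Real.exp_pos x).le
      refine lt_of_le_of_lt hle ?_
      have hEpos : 0 < Real.exp ((K+1)*x) := Real.exp_pos _
      simp only [hBdef, hB'def] at hhx ⊢
      nlinarith [Real.exp_pos x, mul_le_mul_of_nonneg_left hEe hM0,
        mul_pos hε hEpos, mul_le_mul_of_nonneg_left hEe hK]
    intro t ht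
    exact image_norm_le_of_norm_deriv_right_lt_deriv_boundary hh_cont
      (fun x hx => (hh' x ⟨hx.1, hx.2.le⟩).hasDerivWithinAt) ha hB bound ht
  -- remove slack
  have hw_le : ∀ t ∈ Icc (0:ℝ) T, ‖w t‖ ≤ M * (Real.exp (K*t) - 1) := by
    intro t ht
    have hexp : 0 < Real.exp t := Real.exp_pos t
    have hEt : Real.exp ((K+1)*t) = Real.exp (K*t) * Real.exp t := by
      rw [← Real.exp_add]; ring_nf
    have h1 : Real.exp t * ‖w t‖ ≤ M * (Real.exp ((K+1)*t) - Real.exp t) := by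
      apply le_of_forall_pos_le_add
      intro η hη
      have hEpos : 0 < Real.exp ((K+1)*t) := Real.exp_pos _
      have := key (η / Real.exp ((K+1)*t)) (div_pos hη hEpos) t ht
      have hh_eq : ‖h t‖ = Real.exp t * ‖w t‖ := by
        rw [hhdef, norm_smul, Real.norm_eq_abs, abs_of_pos hexp]
      rw [hh_eq, div_mul_cancel₀ _ hEpos.ne'] at this
      exact this
    rw [hEt] at h1
    have h2 : Real.exp t * ‖w t‖ ≤ Real.exp t * (M * (Real.exp (K*t) - 1)) := by
      calc Real.exp t * ‖w t‖ ≤ M * (Real.exp (K*t) * Real.exp t - Real.exp t) := h1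
        _ = Real.exp t * (M * (Real.exp (K*t) - 1)) := by ring
    exact le_of_mul_le_mul_left h2 hexp
  -- conclude
  have hne : Nonempty (Icc (0:ℝ) T) := ⟨⟨0, h0T⟩⟩
  apply ciSup_le
  rintro ⟨t, ht⟩
  have h1 : ‖u t - un t‖ ≤ M + ‖w t‖ := by
    have hsplit : u t - un t = (u t - P (u t)) + w t := by
      simp only [hwdef]; abel
    rw [hsplit]
    exact le_trans (norm_add_le _ _) (add_le_add_left (hM t ht) _)
  have h2 : ‖u t - un t‖ ≤ M * Real.exp (K*t) := by
    calc ‖u t - un t‖ ≤ M + M * (Real.exp (K*t) - 1) := le_trans h1 (by linarith [hw_le t ht])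
      _ = M * Real.exp (K*t) := by ring
  calc ‖u t - un t‖ ≤ M * Real.exp (K*t) := h2
    _ ≤ M * Real.exp (T*K) := by
        apply mul_le_mul_of_nonneg_left _ hM0
        apply Real.exp_le_exp.2
        rw [mul_comm T K]
        exact mul_le_mul_of_nonneg_left ht.2 hK
    _ = Real.exp (T * K) * M := mul_comm _ _
end

section
/- Let X be a real Banach space, T > 0, J = [0,T], W and P bounded linear operators on X, g : J → X continuous and v ∈ X. Suppose u : J → X is differentiable with u'(t) = −u(t) + W u(t) + g(t) and u(0) = v. Then sup_{t∈J} ‖u(t) − P u(t)‖_X ≤ ‖v − P v‖_X + T · ‖W − P∘W‖ · sup_{t∈J} ‖u(t)‖_X + T · sup_{t∈J} ‖g(t) − P g(t)‖_X, where ‖W − P∘W‖ is the operator norm. -/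
open Set

/-- Projection error bound for the linear neural field equation: if
`u' = -u + Wu + g`, `u(0) = v` on `J = [0,T]`, then
`sup_{t∈J} ‖u(t) − P u(t)‖ ≤ ‖v − Pv‖ + T‖W − P∘W‖ sup_{t∈J}‖u(t)‖ + T sup_{t∈J}‖g(t) − Pg(t)‖`. -/
theorem projection_error_bound
    {X : Type*} [NormedAddCommGroup X] [NormedSpace ℝ X]
    (T : ℝ) (hT : 0 < T)
    (W P : X →L[ℝ] X) (g : ℝ → X) (hg : ContinuousOn g (Icc 0 T)) (v : X)
    (u : ℝ → X)
    (hu : ∀ t ∈ Icc (0 : ℝ) T, HasDerivAt u (-u t + W (u t) + g t) t)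
    (hu0 : u 0 = v) :
    (⨆ t : Icc (0 : ℝ) T, ‖u t - P (u t)‖) ≤
      ‖v - P v‖ + T * ‖W - P.comp W‖ * (⨆ t : Icc (0 : ℝ) T, ‖u t‖)
        + T * ⨆ t : Icc (0 : ℝ) T, ‖g t - P (g t)‖ := by
  have h0T : (0 : ℝ) ∈ Icc (0 : ℝ) T := ⟨le_refl _, hT.le⟩
  haveI : Nonempty (Icc (0 : ℝ) T) := ⟨⟨0, h0T⟩⟩
  set e : ℝ → X := fun t => u t - P (u t) with he_def
  set h : ℝ → X := fun t => (W - P.comp W) (u t) + (g t - P (g t)) with hh_def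
  -- continuity of u on Icc
  have hucont : ContinuousOn u (Icc 0 T) := fun t ht =>
    (hu t ht).continuousAt.continuousWithinAt
  have hecont : ContinuousOn e (Icc 0 T) :=
    hucont.sub (P.continuous.comp_continuousOn hucont)
  -- bounded sups
  obtain ⟨Cu, hCu⟩ := isCompact_Icc.exists_bound_of_continuousOn hucont
  have hbddu : BddAbove (Set.range fun t : Icc (0 : ℝ) T => ‖u t‖) := by
    refine ⟨Cu, ?_⟩; rintro _ ⟨t, rfl⟩; exact hCu t t.2
  have hgPcont : ContinuousOn (fun t => g t - P (g t)) (Icc 0 T) :=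
    hg.sub (P.continuous.comp_continuousOn hg)
  obtain ⟨Cg, hCg⟩ := isCompact_Icc.exists_bound_of_continuousOn hgPcont
  have hbddg : BddAbove (Set.range fun t : Icc (0 : ℝ) T => ‖g t - P (g t)‖) := by
    refine ⟨Cg, ?_⟩; rintro _ ⟨t, rfl⟩; exact hCg t t.2
  have hbdde : BddAbove (Set.range fun t : Icc (0 : ℝ) T => ‖e t‖) := by
    obtain ⟨Ce, hCe⟩ := isCompact_Icc.exists_bound_of_continuousOn hecont
    refine ⟨Ce, ?_⟩; rintro _ ⟨t, rfl⟩; exact hCe t t.2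
  set Su : ℝ := ⨆ t : Icc (0 : ℝ) T, ‖u t‖ with hSu
  set Sg : ℝ := ⨆ t : Icc (0 : ℝ) T, ‖g t - P (g t)‖ with hSg
  set M : ℝ := ‖W - P.comp W‖ * Su + Sg with hM_def
  have hSu0 : 0 ≤ Su := le_trans (norm_nonneg (u 0)) (le_ciSup hbddu ⟨0, h0T⟩)
  have hSg0 : 0 ≤ Sg := le_trans (norm_nonneg _) (le_ciSup hbddg ⟨0, h0T⟩)
  have hM0 : 0 ≤ M :=
    add_nonneg (mul_nonneg (norm_nonneg _) hSu0) hSg0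
  have hMbound : ∀ t ∈ Icc (0 : ℝ) T, ‖h t‖ ≤ M := by
    intro t ht
    have h1 : ‖(W - P.comp W) (u t)‖ ≤ ‖W - P.comp W‖ * Su := by
      refine le_trans ((W - P.comp W).le_opNorm (u t)) ?_
      exact mul_le_mul_of_nonneg_left (le_ciSup hbddu ⟨t, ht⟩) (norm_nonneg _)
    have h2 : ‖g t - P (g t)‖ ≤ Sg := le_ciSup hbddg ⟨t, ht⟩
    calc ‖h t‖ ≤ ‖(W - P.comp W) (u t)‖ + ‖g t - P (g t)‖ := norm_add_le _ _
    _ ≤ M := add_le_add h1 h2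
  -- derivative of e
  have hederiv : ∀ t ∈ Icc (0 : ℝ) T, HasDerivAt e (-(e t) + h t) t := by
    intro t ht
    have hut := hu t ht
    have hPu : HasDerivAt (fun s => P (u s)) (P (-u t + W (u t) + g t)) t :=
      P.hasFDerivAt.comp_hasDerivAt t hut
    have := hut.sub hPu
    convert this using 1
    · rfl
    simp only [he_def, hh_def, map_add, map_neg, ContinuousLinearMap.sub_apply,
      ContinuousLinearMap.comp_apply]
    abel
  -- φ(t) = exp t • e t
  set φ : ℝ → X := fun t => Real.exp t • e t with hφ_def
  have hφderiv : ∀ t ∈ Icc (0 : ℝ) T, HasDerivAt φ (Real.exp t • h t) t := by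
    intro t ht
    have := (Real.hasDerivAt_exp t).smul (hederiv t ht)
    convert this using 1
    · rfl
    simp only [hh_def, smul_add, smul_neg]
    abel
  have hφcont : ContinuousOn φ (Icc 0 T) :=
    Real.continuous_exp.continuousOn.smul hecont
  set B : ℝ → ℝ := fun t => ‖e 0‖ + (Real.exp t - 1) * M with hB_def
  have hBderiv : ∀ t : ℝ, HasDerivAt B (Real.exp t * M) t := by
    intro t
    exact (((Real.hasDerivAt_exp t).sub_const 1).mul_const M).const_add _
  have key : ∀ t ∈ Icc (0 : ℝ) T, ‖φ t‖ ≤ B t := by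
    refine image_norm_le_of_norm_deriv_right_le_deriv_boundary hφcont
      (fun t ht => (hφderiv t (Ico_subset_Icc_self ht)).hasDerivWithinAt) ?_ hBderiv ?_
    · simp [hφ_def, hB_def]
    · intro t ht
      rw [norm_smul, Real.norm_eq_abs, abs_of_pos (Real.exp_pos t)]
      exact mul_le_mul_of_nonneg_left (hMbound t (Ico_subset_Icc_self ht)) (Real.exp_pos t).le
  have key2 : ∀ t ∈ Icc (0 : ℝ) T, ‖e t‖ ≤ ‖e 0‖ + T * M := by
    intro t ht
    have h1 := key t ht
    have hφnorm : ‖φ t‖ = Real.exp t * ‖e t‖ := by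
      rw [hφ_def]; simp [norm_smul, abs_of_pos (Real.exp_pos t)]
    rw [hφnorm, hB_def] at h1
    simp only at h1
    have hexp2 : 1 - t ≤ Real.exp (-t) := by
      have := Real.add_one_le_exp (-t); linarith
    have hexpmul : Real.exp (-t) * Real.exp t = 1 := by
      rw [← Real.exp_add]; simp
    have hexpa1 : Real.exp (-t) ≤ 1 := by
      rw [show (1:ℝ) = Real.exp 0 by simp]
      exact Real.exp_le_exp.mpr (by linarith [ht.1])
    have he00 : (0 : ℝ) ≤ ‖e 0‖ := norm_nonneg _
    have htT : t ≤ T := ht.2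
    have ht0 : 0 ≤ t := ht.1
    have h3 := mul_le_mul_of_nonneg_left h1 (Real.exp_pos (-t)).le
    rw [← mul_assoc, hexpmul, one_mul] at h3
    have h4 : Real.exp (-t) * (‖e 0‖ + (Real.exp t - 1) * M)
        = Real.exp (-t) * ‖e 0‖ + (1 - Real.exp (-t)) * M := by
      linear_combination M * hexpmul
    rw [h4] at h3
    have h5 : (1 - Real.exp (-t)) * M ≤ t * M :=
      mul_le_mul_of_nonneg_right (by linarith) hM0
    have h6 : t * M ≤ T * M := mul_le_mul_of_nonneg_right htT hM0
    have h7 : Real.exp (-t) * ‖e 0‖ ≤ ‖e 0‖ := by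
      nlinarith
    linarith
  -- conclude
  have hrhs : ‖v - P v‖ + T * ‖W - P.comp W‖ * Su + T * Sg = ‖e 0‖ + T * M := by
    simp only [he_def, hu0, hM_def]; ring
  rw [hrhs]
  exact ciSup_le fun t => key2 t t.2
end

section
/- Let (R_k)_{k≥0} be a sequence of nonnegative real numbers and let ν ≥ 0, γ ≥ 0 be such that R_k ≤ ν · ∑_{l=1}^{k} γ^l R_{k−l} for every k ≥ 1. Then R_k ≤ ν (ν+1)^{k−1} γ^k R_0 for every k ≥ 1; in particular R_k ≤ ((ν+1)γ)^k R_0 for every k ≥ 0. -/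
/-- Combinatorial recursion estimate: if `R_k ≤ ν ∑_{l=1}^k γ^l R_{k-l}` for all `k ≥ 1`,
with `R_k ≥ 0`, `ν ≥ 0`, `γ ≥ 0`, then `R_k ≤ ν (ν+1)^{k-1} γ^k R_0` for `k ≥ 1`, and in
particular `R_k ≤ ((ν+1)γ)^k R_0` for all `k ≥ 0`. -/
theorem recursion_estimate
    (R : ℕ → ℝ) (hR : ∀ k, 0 ≤ R k)
    (ν γ : ℝ) (hν : 0 ≤ ν) (hγ : 0 ≤ γ)
    (hrec : ∀ k : ℕ, 1 ≤ k → R k ≤ ν * ∑ l ∈ Finset.Icc 1 k, γ ^ l * R (k - l)) :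
    (∀ k : ℕ, 1 ≤ k → R k ≤ ν * (ν + 1) ^ (k - 1) * γ ^ k * R 0) ∧
      (∀ k : ℕ, R k ≤ ((ν + 1) * γ) ^ k * R 0) := by
  have key : ∀ k : ℕ, 1 ≤ k → R k ≤ ν * (ν + 1) ^ (k - 1) * γ ^ k * R 0 := by
    intro k
    induction k using Nat.strong_induction_on with
    | _ k ih =>
      intro hk
      have h1 := hrec k hk
      have hbound : ∀ l ∈ Finset.Icc 1 k, γ ^ l * R (k - l) ≤
          (if l = k then γ ^ k * R 0 else ν * (ν + 1) ^ (k - l - 1) * γ ^ k * R 0) := by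
        intro l hl
        simp only [Finset.mem_Icc] at hl
        by_cases hlk : l = k
        · simp [hlk]
        · have hlt : l < k := lt_of_le_of_ne hl.2 hlk
          have h2 : 1 ≤ k - l := by omega
          have hih := ih (k - l) (by omega) h2
          simp only [hlk, if_false]
          calc γ ^ l * R (k - l)
              ≤ γ ^ l * (ν * (ν + 1) ^ (k - l - 1) * γ ^ (k - l) * R 0) :=
                mul_le_mul_of_nonneg_left hih (pow_nonneg hγ l)
            _ = ν * (ν + 1) ^ (k - l - 1) * (γ ^ l * γ ^ (k - l)) * R 0 := by ring
            _ = ν * (ν + 1) ^ (k - l - 1) * γ ^ k * R 0 := by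
                rw [← pow_add, Nat.add_sub_cancel' (le_of_lt hlt)]
      have hsum : (∑ l ∈ Finset.Icc 1 k, γ ^ l * R (k - l)) ≤
          ∑ l ∈ Finset.Icc 1 k,
            (if l = k then γ ^ k * R 0 else ν * (ν + 1) ^ (k - l - 1) * γ ^ k * R 0) :=
        Finset.sum_le_sum hbound
      have hsplit : ∑ l ∈ Finset.Icc 1 k,
            (if l = k then γ ^ k * R 0 else ν * (ν + 1) ^ (k - l - 1) * γ ^ k * R 0)
          = γ ^ k * R 0 + ∑ l ∈ Finset.Icc 1 (k - 1), ν * (ν + 1) ^ (k - l - 1) * γ ^ k * R 0 := by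
        have : Finset.Icc 1 k = insert k (Finset.Icc 1 (k - 1)) := by
          ext x; simp [Finset.mem_Icc, Finset.mem_insert]; omega
        rw [this, Finset.sum_insert (by simp [Finset.mem_Icc]; omega)]
        simp only [if_pos rfl]
        congr 1
        apply Finset.sum_congr rfl
        intro l hl
        simp only [Finset.mem_Icc] at hl
        rw [if_neg (by omega)]
      have hgeo : ∑ l ∈ Finset.Icc 1 (k - 1), ν * (ν + 1) ^ (k - l - 1) * γ ^ k * R 0
          = (∑ j ∈ Finset.range (k - 1), (ν + 1) ^ j) * ν * (γ ^ k * R 0) := by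
        rw [Finset.sum_mul, Finset.sum_mul,
          show Finset.Icc 1 (k - 1) = Finset.Ico 1 k by
            rw [← Finset.Ico_add_one_right_eq_Icc]; congr 1; omega,
          Finset.sum_Ico_eq_sum_range]
        rw [← Finset.sum_range_reflect (fun j => (ν + 1) ^ j * ν * (γ ^ k * R 0)) (k - 1)]
        apply Finset.sum_congr rfl
        intro j hj
        simp only [Finset.mem_range] at hj
        have : k - (1 + j) - 1 = k - 1 - 1 - j := by omega
        rw [this]; ring
      have hgeo2 : (∑ j ∈ Finset.range (k - 1), (ν + 1) ^ j) * ν = (ν + 1) ^ (k - 1) - 1 := by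
        have := geom_sum_mul (ν + 1) (k - 1)
        simpa using this
      calc R k ≤ ν * ∑ l ∈ Finset.Icc 1 k, γ ^ l * R (k - l) := h1
        _ ≤ ν * (γ ^ k * R 0 + ((ν + 1) ^ (k - 1) - 1) * (γ ^ k * R 0)) := by
            apply mul_le_mul_of_nonneg_left _ hν
            rw [← hgeo2, ← hgeo, ← hsplit]
            exact hsum
        _ = ν * (ν + 1) ^ (k - 1) * γ ^ k * R 0 := by ring
  refine ⟨key, fun k => ?_⟩
  rcases Nat.eq_zero_or_pos k with rfl | hk
  · simp
  · calc R k ≤ ν * (ν + 1) ^ (k - 1) * γ ^ k * R 0 := key k hk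
      _ ≤ (ν + 1) ^ k * γ ^ k * R 0 := by
          apply mul_le_mul_of_nonneg_right _ (hR 0)
          apply mul_le_mul_of_nonneg_right _ (pow_nonneg hγ k)
          calc ν * (ν + 1) ^ (k - 1) ≤ (ν + 1) * (ν + 1) ^ (k - 1) := by
                apply mul_le_mul_of_nonneg_right (by linarith) (pow_nonneg (by linarith) _)
            _ = (ν + 1) ^ k := by
                rw [← pow_succ']; congr 1; omega
      _ = ((ν + 1) * γ) ^ k * R 0 := by rw [mul_pow]
end

section
/- Let X be a real Banach space, Γ ⊆ ℝ an open interval, β > 0, γ > 0, and A : Γ → BL(X) an infinitely differentiable operator-valued map with ‖A(y)‖ ≤ β for all y ∈ Γ and ‖A^{(l)}(y)‖ ≤ β · l! · γ^l for all y ∈ Γ and all l ≥ 1. Let v₀ ∈ X and h : [0,T] → X continuous, and let u(t,y) = e^{tA(y)} v₀ + ∫_0^t e^{(t−s)A(y)} h(s) ds be the solution of u'(t,y) = A(y) u(t,y) + h(t), u(0,y) = v₀. Then for each t ∈ [0,T] the map y ↦ u(t,y) is infinitely differentiable, and for all y ∈ Γ, t ∈ [0,T] and all integers k ≥ 0, ‖∂_y^k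 u(t,y)‖_X ≤ (‖v₀‖_X + t · sup_{s∈[0,T]}‖h(s)‖_X) · e^{tβ} · k! · (γ e^{tβ})^k. -/
open Set MeasureTheory

section MainAux
variable {F : Type*} [NormedAddCommGroup F] [NormedSpace ℝ F] [CompleteSpace F]

private theorem hasDerivAt_iteratedDerivWithin_step
    {f : ℝ → F} {s : Set ℝ} (hs : IsOpen s) (hf : ContDiffOn ℝ (⊤ : ℕ∞) f s)
    {k : ℕ} {x : ℝ} (hx : x ∈ s) :
    HasDerivAt (iteratedDerivWithin k f s) (iteratedDerivWithin (k + 1) f s x) x := by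
  have hdo : DifferentiableOn ℝ (iteratedDerivWithin k f s) s :=
    hf.differentiableOn_iteratedDerivWithin (by exact_mod_cast ENat.coe_lt_top k)
      hs.uniqueDiffOn
  have hd : DifferentiableAt ℝ (iteratedDerivWithin k f s) x :=
    (hdo x hx).differentiableAt (hs.mem_nhds hx)
  have h1 : iteratedDerivWithin (k + 1) f s x = deriv (iteratedDerivWithin k f s) x := by
    rw [iteratedDerivWithin_succ, derivWithin_of_isOpen hs hx]
  rw [h1]
  exact hd.hasDerivAt

private theorem my_hasDerivAt_tsum
    {f : ℕ → ℝ → F} {s : Set ℝ} (hs : IsOpen s) (h's : IsPreconnected s)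
    {v : ℕ → ℕ → ℝ}
    (hf : ∀ m, ContDiffOn ℝ (⊤ : ℕ∞) (f m) s)
    (hv : ∀ k, Summable (v k))
    (hfv : ∀ k m, ∀ y ∈ s, ‖iteratedDerivWithin k (f m) s y‖ ≤ v k m)
    (k : ℕ) {x₀ x : ℝ} (hx₀ : x₀ ∈ s) (hx : x ∈ s) :
    HasDerivAt (fun z => ∑' m, iteratedDerivWithin k (f m) s z)
      (∑' m, iteratedDerivWithin (k + 1) (f m) s x) x :=
  hasDerivAt_tsum_of_isPreconnected (hv (k + 1)) hs h's
    (fun m y hy => hasDerivAt_iteratedDerivWithin_step hs (hf m) hy)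
    (fun m y hy => hfv (k + 1) m y hy) hx₀
    (Summable.of_norm_bounded (hv k) (fun m => hfv k m x₀ hx₀)) hx

private theorem my_iteratedDerivWithin_tsum
    {f : ℕ → ℝ → F} {s : Set ℝ} (hs : IsOpen s) (h's : IsPreconnected s)
    {v : ℕ → ℕ → ℝ}
    (hf : ∀ m, ContDiffOn ℝ (⊤ : ℕ∞) (f m) s)
    (hv : ∀ k, Summable (v k))
    (hfv : ∀ k m, ∀ y ∈ s, ‖iteratedDerivWithin k (f m) s y‖ ≤ v k m) :
    ∀ k, ∀ y ∈ s, iteratedDerivWithin k (fun z => ∑' m, f m z) s y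
        = ∑' m, iteratedDerivWithin k (f m) s y := by
  intro k
  induction k with
  | zero => intro y _; simp
  | succ k IH =>
    intro y hy
    have key := my_hasDerivAt_tsum hs h's hf hv hfv k hy hy
    rw [iteratedDerivWithin_succ,
      derivWithin_congr (fun z hz => IH z hz) (IH y hy), derivWithin_of_isOpen hs hy]
    exact key.deriv

private theorem my_contDiffOn_tsum
    {f : ℕ → ℝ → F} {s : Set ℝ} (hs : IsOpen s) (h's : IsPreconnected s)
    {v : ℕ → ℕ → ℝ}
    (hf : ∀ m, ContDiffOn ℝ (⊤ : ℕ∞) (f m) s)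
    (hv : ∀ k, Summable (v k))
    (hfv : ∀ k m, ∀ y ∈ s, ‖iteratedDerivWithin k (f m) s y‖ ≤ v k m) :
    ContDiffOn ℝ (⊤ : ℕ∞) (fun z => ∑' m, f m z) s := by
  rcases s.eq_empty_or_nonempty with rfl | ⟨x₀, hx₀⟩
  · intro x hx; exact absurd hx (notMem_empty x)
  · apply contDiffOn_of_differentiableOn_deriv
    intro k _
    have hdiff : DifferentiableOn ℝ (fun z => ∑' m, iteratedDerivWithin k (f m) s z) s :=
      fun x hx =>
        ((my_hasDerivAt_tsum hs h's hf hv hfv k hx₀ hx).differentiableAt).differentiableWithinAt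
    exact hdiff.congr (fun x hx => my_iteratedDerivWithin_tsum hs h's hf hv hfv k x hx)

end MainAux

section MainAux2
variable {X : Type*} [NormedAddCommGroup X] [NormedSpace ℝ X]

private theorem pow_iteratedDerivWithin_bound
    {s : Set ℝ} (hs : IsOpen s)
    {B : ℝ → X →L[ℝ] X} (hB : ContDiffOn ℝ (⊤ : ℕ∞) B s)
    {β γ : ℝ} (hβ : 0 ≤ β) (hγ : 0 ≤ γ)
    (hb : ∀ l : ℕ, ∀ y ∈ s, ‖iteratedDerivWithin l B s y‖ ≤ β * (Nat.factorial l) * γ ^ l) :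
    ∀ m k : ℕ, ∀ y ∈ s, ‖iteratedDerivWithin k (fun z => B z ^ m) s y‖ ≤
      β ^ m * (Nat.factorial k) * γ ^ k * ((k : ℝ) + 1) ^ m := by
  intro m
  induction m with
  | zero =>
    intro k y hy
    have hfun : (fun z : ℝ => B z ^ 0) = fun _ => (1 : X →L[ℝ] X) := by
      funext z; rw [pow_zero]
    rw [hfun]
    rcases Nat.eq_zero_or_pos k with rfl | hk
    · simp; exact ContinuousLinearMap.norm_id_le
    · rw [← norm_iteratedFDerivWithin_eq_norm_iteratedDerivWithin,
        iteratedFDerivWithin_const_of_ne (Nat.pos_iff_ne_zero.mp hk) _ _, Pi.zero_apply]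
      simp only [norm_zero, pow_zero, one_pow, mul_one, one_mul]
      positivity
  | succ m IH =>
    intro k y hy
    have hfun : (fun z : ℝ => B z ^ (m + 1)) = fun z => B z * B z ^ m := by
      funext z; rw [pow_succ']
    rw [hfun, ← norm_iteratedFDerivWithin_eq_norm_iteratedDerivWithin]
    refine le_trans
      (norm_iteratedFDerivWithin_mul_le hB (hB.pow m) hs.uniqueDiffOn hy
        (by exact_mod_cast le_top)) ?_
    have hterm : ∀ i ∈ Finset.range (k + 1),
        (k.choose i : ℝ) * ‖iteratedFDerivWithin ℝ i B s y‖ *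
          ‖iteratedFDerivWithin ℝ (k - i) (fun z => B z ^ m) s y‖ ≤
        β ^ (m + 1) * (Nat.factorial k) * γ ^ k * ((k : ℝ) + 1) ^ m := by
      intro i hi
      have hik : i ≤ k := Nat.lt_succ_iff.mp (Finset.mem_range.mp hi)
      have h1 : ‖iteratedFDerivWithin ℝ i B s y‖ ≤ β * (Nat.factorial i) * γ ^ i := by
        rw [norm_iteratedFDerivWithin_eq_norm_iteratedDerivWithin]; exact hb i y hy
      have h2 : ‖iteratedFDerivWithin ℝ (k - i) (fun z => B z ^ m) s y‖ ≤
          β ^ m * (Nat.factorial (k - i)) * γ ^ (k - i) * (((k - i : ℕ) : ℝ) + 1) ^ m := by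
        rw [norm_iteratedFDerivWithin_eq_norm_iteratedDerivWithin]; exact IH (k - i) y hy
      have step1 : (k.choose i : ℝ) * ‖iteratedFDerivWithin ℝ i B s y‖ *
          ‖iteratedFDerivWithin ℝ (k - i) (fun z => B z ^ m) s y‖ ≤
          (k.choose i : ℝ) * (β * (Nat.factorial i) * γ ^ i) *
            (β ^ m * (Nat.factorial (k - i)) * γ ^ (k - i) * (((k - i : ℕ) : ℝ) + 1) ^ m) := by
        exact mul_le_mul (mul_le_mul_of_nonneg_left h1 (by positivity)) h2 (norm_nonneg _)
          (by positivity)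
      refine step1.trans ?_
      have hfact : (k.choose i : ℝ) * (Nat.factorial i) * (Nat.factorial (k - i))
          = (Nat.factorial k : ℝ) := by
        exact_mod_cast congrArg (Nat.cast (R := ℝ)) (Nat.choose_mul_factorial_mul_factorial hik)
      have hγpow : γ ^ i * γ ^ (k - i) = γ ^ k := by
        rw [← pow_add, Nat.add_sub_cancel' hik]
      have heq : (k.choose i : ℝ) * (β * (Nat.factorial i) * γ ^ i) *
            (β ^ m * (Nat.factorial (k - i)) * γ ^ (k - i) * (((k - i : ℕ) : ℝ) + 1) ^ m)
          = β ^ (m + 1) * (Nat.factorial k) * γ ^ k * (((k - i : ℕ) : ℝ) + 1) ^ m := by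
        calc (k.choose i : ℝ) * (β * (Nat.factorial i) * γ ^ i) *
              (β ^ m * (Nat.factorial (k - i)) * γ ^ (k - i) * (((k - i : ℕ) : ℝ) + 1) ^ m)
            = ((k.choose i : ℝ) * (Nat.factorial i) * (Nat.factorial (k - i))) *
              (γ ^ i * γ ^ (k - i)) * (β ^ (m + 1)) * (((k - i : ℕ) : ℝ) + 1) ^ m := by
              rw [pow_succ]; ring
          _ = β ^ (m + 1) * (Nat.factorial k) * γ ^ k * (((k - i : ℕ) : ℝ) + 1) ^ m := by
              rw [hfact, hγpow]; ring
      rw [heq]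
      refine mul_le_mul_of_nonneg_left (pow_le_pow_left₀ (by positivity) ?_ m) (by positivity)
      have : ((k - i : ℕ) : ℝ) ≤ (k : ℝ) := by exact_mod_cast Nat.sub_le k i
      linarith
    refine le_trans (Finset.sum_le_sum hterm) ?_
    rw [Finset.sum_const, Finset.card_range, nsmul_eq_mul]
    have : β ^ (m + 1) * (Nat.factorial k) * γ ^ k * ((k : ℝ) + 1) ^ (m + 1)
        = ((k : ℕ) + 1 : ℕ) * (β ^ (m + 1) * (Nat.factorial k) * γ ^ k * ((k : ℝ) + 1) ^ m) := by
      push_cast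
      rw [pow_succ]
      ring
    rw [this]

set_option synthInstance.maxHeartbeats 1000000 in
private theorem hasSum_exp_smul_apply [CompleteSpace X] (B : X →L[ℝ] X) (c : ℝ) (w : X) :
    HasSum (fun m : ℕ => (c ^ m / (Nat.factorial m : ℝ)) • ((B ^ m) w))
      (NormedSpace.exp (c • B) w) := by
  have h1 := NormedSpace.exp_series_hasSum_exp' (𝕂 := ℝ) (c • B)
  have h2 : ∀ m : ℕ, ((Nat.factorial m : ℝ))⁻¹ • (c • B) ^ m
      = (c ^ m / (Nat.factorial m : ℝ)) • (B ^ m) := by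
    intro m
    rw [smul_pow, smul_smul, div_eq_mul_inv, mul_comm]
  simp only [h2] at h1
  have h3 := h1.mapL (ContinuousLinearMap.apply ℝ X w)
  simpa only [_root_.map_smul, ContinuousLinearMap.apply_apply] using h3

private theorem norm_clm_pow_le (B : X →L[ℝ] X) : ∀ m : ℕ, ‖B ^ m‖ ≤ ‖B‖ ^ m := by
  intro m
  rcases Nat.eq_zero_or_pos m with rfl | hm
  · simp; exact ContinuousLinearMap.norm_id_le
  · exact norm_pow_le' B hm

end MainAux2


/-- Derivative bounds for the linear neural field with random kernel:
if `A : Γ → BL(X)` is smooth with `‖A(y)‖ ≤ β` and `‖A^{(l)}(y)‖ ≤ β l! γ^l` for `l ≥ 1`,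
and `u(t,y) = e^{tA(y)} v₀ + ∫_0^t e^{(t−s)A(y)} h(s) ds`, then for each `t ∈ [0,T]` the
map `y ↦ u(t,y)` is smooth on `Γ` and
`‖∂_y^k u(t,y)‖ ≤ (‖v₀‖ + t sup_s ‖h(s)‖) e^{tβ} k! (γ e^{tβ})^k`. -/
theorem derivative_bound_random_kernel
    {X : Type*} [NormedAddCommGroup X] [NormedSpace ℝ X] [CompleteSpace X]
    (T β γ : ℝ) (hβ : 0 < β) (hγ : 0 < γ)
    (Γ : Set ℝ) (hΓopen : IsOpen Γ) (hΓint : Γ.OrdConnected)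
    (A : ℝ → X →L[ℝ] X) (hA : ContDiffOn ℝ (⊤ : ℕ∞) A Γ)
    (hAbound : ∀ y ∈ Γ, ‖A y‖ ≤ β)
    (hAderiv : ∀ y ∈ Γ, ∀ l : ℕ, 1 ≤ l →
      ‖iteratedDerivWithin l A Γ y‖ ≤ β * (Nat.factorial l) * γ ^ l)
    (v₀ : X) (h : ℝ → X) (hh : ContinuousOn h (Icc 0 T))
    (u : ℝ → ℝ → X)
    (hu : ∀ t y, u t y = NormedSpace.exp (t • A y) v₀ +
      ∫ s in (0 : ℝ)..t, NormedSpace.exp ((t - s) • A y) (h s)) :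
    ∀ t ∈ Icc (0 : ℝ) T,
      ContDiffOn ℝ (⊤ : ℕ∞) (fun y => u t y) Γ ∧
      (∀ y ∈ Γ, ∀ k : ℕ,
        ‖iteratedDerivWithin k (fun y => u t y) Γ y‖ ≤
          (‖v₀‖ + t * ⨆ s : Icc (0 : ℝ) T, ‖h s‖) * Real.exp (t * β) *
            (Nat.factorial k) * (γ * Real.exp (t * β)) ^ k) := by
  intro t ht
  obtain ⟨ht0, htT⟩ := ht
  have hT0 : (0 : ℝ) ≤ T := le_trans ht0 htT
  set M : ℝ := ⨆ s : Icc (0 : ℝ) T, ‖h s‖ with hM_def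
  have hbdd : BddAbove (Set.range fun s : Icc (0 : ℝ) T => ‖h s‖) := by
    have hre : (Set.range fun s : Icc (0 : ℝ) T => ‖h s‖)
        = (fun s => ‖h s‖) '' (Icc (0 : ℝ) T) :=
      Set.range_restrict (fun s : ℝ => ‖h s‖) (Icc (0 : ℝ) T)
    rw [hre]
    exact (isCompact_Icc.image_of_continuousOn hh.norm).bddAbove
  have hM : ∀ s ∈ Icc (0 : ℝ) T, ‖h s‖ ≤ M := fun s hs => le_ciSup hbdd ⟨s, hs⟩
  have hM0 : 0 ≤ M := le_trans (norm_nonneg _) (hM 0 ⟨le_refl 0, hT0⟩)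
  set C₀ : ℝ := ‖v₀‖ + t * M with hC₀_def
  have hC₀ : 0 ≤ C₀ := by positivity
  have hvol : (volume (Ioc (0 : ℝ) t)).toReal = t := by
    rw [Real.volume_Ioc, sub_zero, ENNReal.toReal_ofReal ht0]
  have hvolfin : volume (Ioc (0 : ℝ) t) < ⊤ := by
    rw [Real.volume_Ioc]; exact ENNReal.ofReal_lt_top
  have hIccsub : Icc (0 : ℝ) t ⊆ Icc 0 T := Icc_subset_Icc le_rfl htT
  -- coefficient bounds on [0,t]
  have hcoef : ∀ m : ℕ, ∀ s ∈ Ioc (0 : ℝ) t,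
      |(t - s) ^ m / (Nat.factorial m : ℝ)| ≤ t ^ m / (Nat.factorial m : ℝ) := by
    intro m s hs
    have h1 : 0 ≤ t - s := by linarith [hs.2]
    have h2 : t - s ≤ t := by linarith [hs.1]
    rw [abs_of_nonneg (by positivity)]
    gcongr
  -- integrability
  have hint1 : ∀ m : ℕ, IntegrableOn
      (fun s => ((t - s) ^ m / (Nat.factorial m : ℝ)) • h s) (Ioc 0 t) volume := by
    intro m
    refine (ContinuousOn.integrableOn_Icc ?_).mono_set Ioc_subset_Icc_self
    exact (((continuous_const.sub continuous_id).pow m).div_const _).continuousOn.smul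
      (hh.mono hIccsub)
  have hint2 : ∀ (m : ℕ) (L : X →L[ℝ] X), IntegrableOn
      (fun s => ((t - s) ^ m / (Nat.factorial m : ℝ)) • L (h s)) (Ioc 0 t) volume := by
    intro m L
    refine (ContinuousOn.integrableOn_Icc ?_).mono_set Ioc_subset_Icc_self
    exact (((continuous_const.sub continuous_id).pow m).div_const _).continuousOn.smul
      (L.continuous.comp_continuousOn (hh.mono hIccsub))
  -- the coefficient vectors
  set z : ℕ → X := fun m => (t ^ m / (Nat.factorial m : ℝ)) • v₀ +
    ∫ s in Ioc (0 : ℝ) t, ((t - s) ^ m / (Nat.factorial m : ℝ)) • h s with hz_def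
  have hz_norm : ∀ m : ℕ, ‖z m‖ ≤ (t ^ m / (Nat.factorial m : ℝ)) * C₀ := by
    intro m
    have hn1 : ‖(t ^ m / (Nat.factorial m : ℝ)) • v₀‖
        = (t ^ m / (Nat.factorial m : ℝ)) * ‖v₀‖ := by
      rw [norm_smul, Real.norm_of_nonneg (by positivity)]
    have hn2 : ‖∫ s in Ioc (0 : ℝ) t, ((t - s) ^ m / (Nat.factorial m : ℝ)) • h s‖
        ≤ (t ^ m / (Nat.factorial m : ℝ)) * M * t := by
      have hb : ∀ s ∈ Ioc (0 : ℝ) t, ‖((t - s) ^ m / (Nat.factorial m : ℝ)) • h s‖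
          ≤ (t ^ m / (Nat.factorial m : ℝ)) * M := by
        intro s hs
        rw [norm_smul, Real.norm_eq_abs]
        exact mul_le_mul (hcoef m s hs) (hM s ⟨le_of_lt hs.1, le_trans hs.2 htT⟩)
          (norm_nonneg _) (by positivity)
      have := norm_setIntegral_le_of_norm_le_const hvolfin hb
      rwa [measureReal_def, hvol] at this
    calc ‖z m‖ ≤ ‖(t ^ m / (Nat.factorial m : ℝ)) • v₀‖
          + ‖∫ s in Ioc (0 : ℝ) t, ((t - s) ^ m / (Nat.factorial m : ℝ)) • h s‖ :=
        norm_add_le _ _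
      _ ≤ (t ^ m / (Nat.factorial m : ℝ)) * ‖v₀‖
          + (t ^ m / (Nat.factorial m : ℝ)) * M * t := by rw [hn1]; linarith [hn2]
      _ = (t ^ m / (Nat.factorial m : ℝ)) * C₀ := by rw [hC₀_def]; ring
  -- series representation of the solution
  have hrep : ∀ y : ℝ, u t y = ∑' m : ℕ, ((A y) ^ m) (z m) := by
    intro y
    rw [hu t y]
    have hS1 := hasSum_exp_smul_apply (A y) t v₀
    have hg_int : ∀ m : ℕ, Integrable
        (fun s => ((t - s) ^ m / (Nat.factorial m : ℝ)) • (((A y) ^ m) (h s)))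
        (volume.restrict (Ioc (0 : ℝ) t)) := fun m => hint2 m ((A y) ^ m)
    have hg_norm_le : ∀ m : ℕ,
        (∫ s in Ioc (0 : ℝ) t, ‖((t - s) ^ m / (Nat.factorial m : ℝ)) • (((A y) ^ m) (h s))‖)
          ≤ (M * t) * ((t * ‖A y‖) ^ m / (Nat.factorial m : ℝ)) := by
      intro m
      have hb : ∀ s ∈ Ioc (0 : ℝ) t,
          ‖‖((t - s) ^ m / (Nat.factorial m : ℝ)) • (((A y) ^ m) (h s))‖‖
          ≤ (t ^ m / (Nat.factorial m : ℝ)) * (‖A y‖ ^ m * M) := by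
        intro s hs
        rw [Real.norm_eq_abs, abs_of_nonneg (norm_nonneg _), norm_smul, Real.norm_eq_abs]
        refine mul_le_mul (hcoef m s hs) ?_ (norm_nonneg _) (by positivity)
        calc ‖((A y) ^ m) (h s)‖ ≤ ‖(A y) ^ m‖ * ‖h s‖ := ContinuousLinearMap.le_opNorm _ _
          _ ≤ ‖A y‖ ^ m * M := mul_le_mul (norm_clm_pow_le (A y) m)
              (hM s ⟨le_of_lt hs.1, le_trans hs.2 htT⟩) (norm_nonneg _) (by positivity)
      have hle := norm_setIntegral_le_of_norm_le_const hvolfin hb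
      rw [measureReal_def, hvol] at hle
      calc (∫ s in Ioc (0 : ℝ) t, ‖((t - s) ^ m / (Nat.factorial m : ℝ)) • (((A y) ^ m) (h s))‖)
          ≤ ‖(∫ s in Ioc (0 : ℝ) t,
              ‖((t - s) ^ m / (Nat.factorial m : ℝ)) • (((A y) ^ m) (h s))‖)‖ := le_abs_self _
        _ ≤ (t ^ m / (Nat.factorial m : ℝ)) * (‖A y‖ ^ m * M) * t := hle
        _ = (M * t) * ((t * ‖A y‖) ^ m / (Nat.factorial m : ℝ)) := by
            rw [mul_pow]; ring
    have hg_sum : Summable (fun m : ℕ => ∫ s in Ioc (0 : ℝ) t,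
        ‖((t - s) ^ m / (Nat.factorial m : ℝ)) • (((A y) ^ m) (h s))‖) := by
      refine Summable.of_nonneg_of_le (fun m => integral_nonneg (fun s => norm_nonneg _))
        hg_norm_le ?_
      exact (Real.summable_pow_div_factorial (t * ‖A y‖)).mul_left _
    have hS2 : HasSum
        (fun m : ℕ => ∫ s in Ioc (0 : ℝ) t,
          ((t - s) ^ m / (Nat.factorial m : ℝ)) • (((A y) ^ m) (h s)))
        (∫ s in Ioc (0 : ℝ) t, NormedSpace.exp ((t - s) • A y) (h s)) := by
      have h0 := hasSum_integral_of_summable_integral_norm hg_int hg_sum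
      have he : ∀ s : ℝ, (∑' m : ℕ, ((t - s) ^ m / (Nat.factorial m : ℝ)) • (((A y) ^ m) (h s)))
          = NormedSpace.exp ((t - s) • A y) (h s) :=
        fun s => (hasSum_exp_smul_apply (A y) (t - s) (h s)).tsum_eq
      simpa only [he] using h0
    rw [intervalIntegral.integral_of_le ht0, ← hS1.tsum_eq, ← hS2.tsum_eq,
      ← Summable.tsum_add hS1.summable hS2.summable]
    refine tsum_congr (fun m => ?_)
    rw [hz_def]
    simp only
    rw [map_add, _root_.map_smul]
    congr 1
    rw [← ContinuousLinearMap.integral_comp_comm ((A y) ^ m) (hint1 m)]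
    simp only [_root_.map_smul]
  -- smoothness and bounds for individual terms
  have hpre : IsPreconnected Γ := hΓint.isPreconnected
  have hfCD : ∀ m : ℕ, ContDiffOn ℝ (⊤ : ℕ∞) (fun yy : ℝ => ((A yy) ^ m) (z m)) Γ :=
    fun m => (hA.pow m).clm_apply contDiffOn_const
  have hAd : ∀ l : ℕ, ∀ y ∈ Γ, ‖iteratedDerivWithin l A Γ y‖
      ≤ β * (Nat.factorial l) * γ ^ l := by
    intro l y hy
    rcases Nat.eq_zero_or_pos l with rfl | hl
    · simpa using hAbound y hy
    · exact hAderiv y hy l hl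
  have hpowb := pow_iteratedDerivWithin_bound hΓopen hA hβ.le hγ.le hAd
  set v : ℕ → ℕ → ℝ := fun k m =>
    ((Nat.factorial k : ℝ) * γ ^ k * C₀) * ((t * β * ((k : ℝ) + 1)) ^ m / (Nat.factorial m : ℝ))
    with hv_def
  have hfb : ∀ k m : ℕ, ∀ y ∈ Γ,
      ‖iteratedDerivWithin k (fun yy : ℝ => ((A yy) ^ m) (z m)) Γ y‖ ≤ v k m := by
    intro k m y hy
    rw [← norm_iteratedFDerivWithin_eq_norm_iteratedDerivWithin]
    refine le_trans (norm_iteratedFDerivWithin_clm_apply_const (hA.pow m y hy)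
      hΓopen.uniqueDiffOn hy (by exact_mod_cast le_top)) ?_
    rw [norm_iteratedFDerivWithin_eq_norm_iteratedDerivWithin]
    calc ‖z m‖ * ‖iteratedDerivWithin k (fun z => (A z) ^ m) Γ y‖
        ≤ ((t ^ m / (Nat.factorial m : ℝ)) * C₀) *
          (β ^ m * (Nat.factorial k) * γ ^ k * ((k : ℝ) + 1) ^ m) :=
        mul_le_mul (hz_norm m) (hpowb m k y hy) (norm_nonneg _) (by positivity)
      _ = v k m := by
        rw [hv_def]
        simp only
        rw [mul_pow (t * β), mul_pow t β]
        ring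
  have hvS : ∀ k : ℕ, Summable (v k) :=
    fun k => (Real.summable_pow_div_factorial _).mul_left _
  constructor
  · exact (my_contDiffOn_tsum hΓopen hpre hfCD hvS hfb).congr (fun y _ => hrep y)
  · intro y hy k
    have e0 : iteratedDerivWithin k (fun yy => u t yy) Γ y
        = iteratedDerivWithin k (fun yy => ∑' m : ℕ, ((A yy) ^ m) (z m)) Γ y :=
      iteratedDerivWithin_congr (fun w _ => hrep w) hy
    rw [e0, my_iteratedDerivWithin_tsum hΓopen hpre hfCD hvS hfb k y hy]
    have hnorm_sum : Summable (fun m : ℕ =>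
        ‖iteratedDerivWithin k (fun yy : ℝ => ((A yy) ^ m) (z m)) Γ y‖) :=
      Summable.of_nonneg_of_le (fun m => norm_nonneg _) (fun m => hfb k m y hy) (hvS k)
    have hchain : ‖∑' m : ℕ, iteratedDerivWithin k (fun yy : ℝ => ((A yy) ^ m) (z m)) Γ y‖
        ≤ ((Nat.factorial k : ℝ) * γ ^ k * C₀) * Real.exp (t * β * ((k : ℝ) + 1)) := by
      calc ‖∑' m : ℕ, iteratedDerivWithin k (fun yy : ℝ => ((A yy) ^ m) (z m)) Γ y‖
          ≤ ∑' m : ℕ, ‖iteratedDerivWithin k (fun yy : ℝ => ((A yy) ^ m) (z m)) Γ y‖ :=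
          norm_tsum_le_tsum_norm hnorm_sum
        _ ≤ ∑' m : ℕ, v k m := Summable.tsum_le_tsum (fun m => hfb k m y hy) hnorm_sum (hvS k)
        _ = ((Nat.factorial k : ℝ) * γ ^ k * C₀) * Real.exp (t * β * ((k : ℝ) + 1)) := by
          rw [hv_def]
          simp only
          rw [tsum_mul_left]
          congr 1
          rw [Real.exp_eq_exp_ℝ]
          exact (NormedSpace.expSeries_div_hasSum_exp (t * β * ((k : ℝ) + 1))).tsum_eq
    refine hchain.trans_eq ?_
    rw [hC₀_def, mul_pow γ, show t * β * ((k : ℝ) + 1) = t * β + (k : ℝ) * (t * β) by ring,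
      Real.exp_add, Real.exp_nat_mul]
    ring
end

section
/- Let B be a complex Banach space, Γ ⊆ ℝ an interval, and f : Γ → B infinitely differentiable (as a function of the real variable) such that there exist D ≥ 0 and δ > 0 with ‖f^{(k)}(y)‖_B ≤ D · k! · δ^k for all y ∈ Γ and all integers k ≥ 0. Then for every 0 < τ < 1/δ there exists a function F : Σ(Γ,τ) → B, where Σ(Γ,τ) = {z ∈ ℂ : dist(z,Γ) < τ}, such that F is complex-differentiable (holomorphic) on the open set Σ(Γ,τ) and F(y) = f(y) for every y ∈ Γ. -/
open Set Filter Topology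

/-- Auxiliary: convergence of the Taylor series of `f` at `y₀ ∈ Γ` to `f y`, for `y ∈ Γ`
with `|y - y₀| < τ < 1/δ`, under factorial-geometric derivative bounds. -/
lemma taylor_hasSum_aux {B : Type*} [NormedAddCommGroup B] [NormedSpace ℝ B] [CompleteSpace B]
    {Γ : Set ℝ} (hΓ : Γ.OrdConnected) {f : ℝ → B} (hf : ContDiffOn ℝ (⊤ : ℕ∞) f Γ)
    {D δ : ℝ} (hD : 0 ≤ D) (hδ : 0 < δ)
    (hbound : ∀ y ∈ Γ, ∀ k : ℕ,
      ‖iteratedDerivWithin k f Γ y‖ ≤ D * (Nat.factorial k) * δ ^ k)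
    {τ : ℝ} (hτδ : τ < 1 / δ) {y₀ y : ℝ} (hy₀ : y₀ ∈ Γ) (hy : y ∈ Γ) (hr : |y - y₀| < τ) :
    HasSum (fun k : ℕ => (((k.factorial : ℝ))⁻¹ * (y - y₀) ^ k) •
      iteratedDerivWithin k f Γ y₀) (f y) := by
  rcases eq_or_ne y y₀ with rfl | hne
  · have h0 : ∀ k : ℕ, k ≠ 0 →
        (((k.factorial : ℝ))⁻¹ * (y - y) ^ k) • iteratedDerivWithin k f Γ y = 0 := by
      intro k hk
      simp [sub_self, zero_pow hk]
    have := hasSum_single (f := fun k : ℕ => (((k.factorial : ℝ))⁻¹ * (y - y) ^ k) •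
      iteratedDerivWithin k f Γ y) 0 h0
    simpa [iteratedDerivWithin_zero] using this
  · set r : ℝ := |y - y₀| with hrdef
    have hr0 : 0 < r := abs_pos.2 (sub_ne_zero.2 hne)
    have hδr : δ * r < 1 := by
      have : r < 1 / δ := lt_trans hr hτδ
      calc δ * r < δ * (1 / δ) := by gcongr
        _ = 1 := by field_simp
    have huniq : UniqueDiffOn ℝ Γ := by
      apply uniqueDiffOn_convex hΓ.convex
      have hsub : Ioo (y₀ ⊓ y) (y₀ ⊔ y) ⊆ interior Γ := by
        rw [← interior_Icc]
        exact interior_mono (hΓ.uIcc_subset hy₀ hy)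
      have hlt : y₀ ⊓ y < y₀ ⊔ y := inf_lt_sup.2 (Ne.symm hne)
      exact (nonempty_Ioo.2 hlt).mono hsub
    -- derivative of the Taylor polynomial in the base point, within Γ
    have hder : ∀ n : ℕ, ∀ t ∈ Γ, HasDerivWithinAt (fun t' => taylorWithinEval f n Γ t' y)
        (((n.factorial : ℝ)⁻¹ * (y - t) ^ n) • iteratedDerivWithin (n + 1) f Γ t) Γ t := by
      intro n t ht
      have hfn : ContDiffOn ℝ (n : ℕ) f Γ := hf.of_le (mod_cast le_top)
      have hdiffn : DifferentiableOn ℝ (iteratedDerivWithin n f Γ) Γ :=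
        hf.differentiableOn_iteratedDerivWithin (mod_cast lt_top_iff_ne_top.2 (by simp)) huniq
      exact hasDerivWithinAt_taylorWithinEval huniq self_mem_nhdsWithin ht
        Subset.rfl hfn (hdiffn t ht)
    have hfactpos : ∀ n : ℕ, (0:ℝ) < (n.factorial : ℝ) := fun n => by
      exact_mod_cast n.factorial_pos
    -- remainder bound
    have hrem : ∀ n : ℕ, ‖f y - taylorWithinEval f n Γ y₀ y‖ ≤ D * (n + 1) * (δ * r) ^ (n + 1) := by
      intro n
      have hfact : (((n+1).factorial : ℝ)) = (n + 1) * (n.factorial : ℝ) := by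
        exact_mod_cast Nat.factorial_succ n
      set C : ℝ := D * (n + 1) * δ ^ (n + 1) * r ^ n with hC
      have hbnd : ∀ a b : ℝ, Icc a b ⊆ Γ → (∀ t', a ≤ t' → t' ≤ b → |y - t'| ≤ r) →
          ∀ t ∈ Ico a b,
          ‖((n.factorial : ℝ)⁻¹ * (y - t) ^ n) • iteratedDerivWithin (n + 1) f Γ t‖ ≤ C := by
        intro a b hab habs t ht
        have htΓ : t ∈ Γ := hab (Ico_subset_Icc_self ht)
        have hyt : |y - t| ≤ r := habs t ht.1 ht.2.le
        calc ‖((n.factorial : ℝ)⁻¹ * (y - t) ^ n) • iteratedDerivWithin (n + 1) f Γ t‖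
            = |(n.factorial : ℝ)⁻¹ * (y - t) ^ n| * ‖iteratedDerivWithin (n + 1) f Γ t‖ := by
              rw [norm_smul, Real.norm_eq_abs]
          _ ≤ ((n.factorial : ℝ)⁻¹ * r ^ n) * (D * ((n+1).factorial : ℝ) * δ ^ (n + 1)) := by
              apply mul_le_mul _ (hbound t htΓ (n+1)) (norm_nonneg _) (by positivity)
              rw [abs_mul, abs_pow, abs_inv, Nat.abs_cast]
              exact mul_le_mul_of_nonneg_left
                (pow_le_pow_left₀ (abs_nonneg _) hyt n) (by positivity)
          _ = C := by
              rw [hC, hfact]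
              field_simp
      rcases le_total y₀ y with hle | hle
      · have hIcc : Icc y₀ y ⊆ Γ := hΓ.out hy₀ hy
        have hmvt := norm_image_sub_le_of_norm_deriv_le_segment'
          (f := fun t' => taylorWithinEval f n Γ t' y)
          (fun t ht => ((hder n t (hIcc ht)).mono hIcc))
          (hbnd y₀ y hIcc (fun t' h1 h2 => by
            rw [abs_of_nonneg (by linarith), hrdef, abs_of_nonneg (by linarith)]; linarith))
          y (right_mem_Icc.2 hle)
        rw [taylorWithinEval_self] at hmvt
        have hry : r = y - y₀ := by rw [hrdef, abs_of_nonneg (by linarith)]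
        calc ‖f y - taylorWithinEval f n Γ y₀ y‖ ≤ C * (y - y₀) := hmvt
          _ = D * (n + 1) * (δ * r) ^ (n + 1) := by
              rw [hC, ← hry, mul_pow, pow_succ r n]; ring
      · have hIcc : Icc y y₀ ⊆ Γ := hΓ.out hy hy₀
        have hmvt := norm_image_sub_le_of_norm_deriv_le_segment'
          (f := fun t' => taylorWithinEval f n Γ t' y)
          (fun t ht => ((hder n t (hIcc ht)).mono hIcc))
          (hbnd y y₀ hIcc (fun t' h1 h2 => by
            rw [abs_of_nonpos (by linarith), hrdef, abs_of_nonpos (by linarith)]; linarith))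
          y₀ (right_mem_Icc.2 hle)
        rw [taylorWithinEval_self, norm_sub_rev] at hmvt
        have hry : r = y₀ - y := by rw [hrdef, abs_of_nonpos (by linarith)]; ring
        calc ‖f y - taylorWithinEval f n Γ y₀ y‖ ≤ C * (y₀ - y) := hmvt
          _ = D * (n + 1) * (δ * r) ^ (n + 1) := by
              rw [hC, ← hry, mul_pow, pow_succ r n]; ring
    -- summability
    set term : ℕ → B := fun k => (((k.factorial : ℝ))⁻¹ * (y - y₀) ^ k) •
      iteratedDerivWithin k f Γ y₀ with hterm
    have hsummable : Summable term := by
      apply Summable.of_norm_bounded (g := fun k => D * (δ * r) ^ k)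
        ((summable_geometric_of_lt_one (by positivity) hδr).mul_left D)
      intro k
      calc ‖term k‖ = |(k.factorial : ℝ)⁻¹ * (y - y₀) ^ k| * ‖iteratedDerivWithin k f Γ y₀‖ := by
            rw [hterm, norm_smul, Real.norm_eq_abs]
        _ ≤ ((k.factorial : ℝ)⁻¹ * r ^ k) * (D * (k.factorial : ℝ) * δ ^ k) := by
            apply mul_le_mul _ (hbound y₀ hy₀ k) (norm_nonneg _)
            · positivity
            · rw [abs_mul, abs_pow, abs_inv, Nat.abs_cast, hrdef]
        _ = D * (δ * r) ^ k := by
            have := (hfactpos k).ne'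
            rw [mul_pow]
            field_simp
    obtain ⟨S, hS⟩ := hsummable
    have h1 : Tendsto (fun n => ∑ k ∈ Finset.range (n + 1), term k) atTop (𝓝 S) :=
      hS.tendsto_sum_nat.comp (tendsto_add_atTop_nat 1)
    have h2 : Tendsto (fun n => ∑ k ∈ Finset.range (n + 1), term k) atTop (𝓝 (f y)) := by
      rw [← tendsto_sub_nhds_zero_iff]
      apply squeeze_zero_norm (a := fun n : ℕ => D * ((n : ℝ) + 1) * (δ * r) ^ (n + 1))
      · intro n
        have hpar : ∑ k ∈ Finset.range (n + 1), term k = taylorWithinEval f n Γ y₀ y :=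
          (taylor_within_apply f n Γ y₀ y).symm
        rw [hpar, norm_sub_rev]
        exact hrem n
      · have hnorm : ‖δ * r‖ < 1 := by
          rw [Real.norm_eq_abs, abs_of_nonneg (by positivity)]; exact hδr
        have h3 := (summable_pow_mul_geometric_of_norm_lt_one 1 hnorm).tendsto_atTop_zero
        have h4 := (h3.comp (tendsto_add_atTop_nat 1)).const_mul D
        rw [mul_zero] at h4
        convert h4 using 2 with n
        simp only [Function.comp_apply, pow_one]
        push_cast
        ring
    have hSf : S = f y := tendsto_nhds_unique h1 h2
    exact hSf ▸ hS

/-- Complex-analytic extension from factorial-geometric derivative bounds: if the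
`B`-valued function `f` of a real variable is smooth on the interval `Γ ⊆ ℝ` with
`‖f^{(k)}(y)‖ ≤ D k! δ^k`, then for every `0 < τ < 1/δ` there is a holomorphic
`F : Σ(Γ,τ) → B` on the open complex neighbourhood `Σ(Γ,τ) = {z : dist(z,Γ) < τ}`
with `F = f` on `Γ`. -/
theorem complex_analytic_extension
    {B : Type*} [NormedAddCommGroup B] [NormedSpace ℂ B] [CompleteSpace B]
    (Γ : Set ℝ) (hΓ : Γ.OrdConnected)
    (f : ℝ → B) (hf : ContDiffOn ℝ (⊤ : ℕ∞) f Γ)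
    (D δ : ℝ) (hD : 0 ≤ D) (hδ : 0 < δ)
    (hbound : ∀ y ∈ Γ, ∀ k : ℕ,
      ‖iteratedDerivWithin k f Γ y‖ ≤ D * (Nat.factorial k) * δ ^ k) :
    ∀ τ : ℝ, 0 < τ → τ < 1 / δ →
      ∃ F : ℂ → B,
        DifferentiableOn ℂ F {z : ℂ | Metric.infDist z (Complex.ofReal '' Γ) < τ} ∧
        ∀ y ∈ Γ, F (y : ℂ) = f y := by
  intro τ hτ0 hτδ
  rcases Γ.eq_empty_or_nonempty with rfl | hΓne
  · exact ⟨0, differentiableOn_const 0, by simp⟩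
  classical
  have hδτ : δ * τ < 1 := by
    calc δ * τ < δ * (1 / δ) := by gcongr
      _ = 1 := by field_simp
  set d : ℝ → ℕ → B := fun y₀ k => ((k.factorial : ℝ))⁻¹ • iteratedDerivWithin k f Γ y₀ with hd
  set p : ℝ → FormalMultilinearSeries ℂ ℂ B :=
    fun y₀ k => ContinuousMultilinearMap.mkPiRing ℂ (Fin k) (d y₀ k) with hp
  have hrad : ∀ y₀ ∈ Γ, ENNReal.ofReal τ ≤ (p y₀).radius := by
    intro y₀ hy₀
    have hb : ∀ n : ℕ, ‖p y₀ n‖ * ((τ.toNNReal : ℝ)) ^ n ≤ D := by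
      intro n
      have hτc : ((τ.toNNReal : ℝ)) = τ := Real.coe_toNNReal _ hτ0.le
      have h1 : ‖p y₀ n‖ = ‖d y₀ n‖ := ContinuousMultilinearMap.norm_mkPiRing _
      have h2 : ‖d y₀ n‖ ≤ D * δ ^ n := by
        rw [hd]
        calc ‖((n.factorial : ℝ))⁻¹ • iteratedDerivWithin n f Γ y₀‖
            = |((n.factorial : ℝ))⁻¹| * ‖iteratedDerivWithin n f Γ y₀‖ := by
              rw [norm_smul, Real.norm_eq_abs]
          _ ≤ ((n.factorial : ℝ))⁻¹ * (D * (n.factorial : ℝ) * δ ^ n) := by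
              apply mul_le_mul _ (hbound y₀ hy₀ n) (norm_nonneg _) (by positivity)
              rw [abs_inv, Nat.abs_cast]
          _ = D * δ ^ n := by
              have : ((n.factorial : ℝ)) ≠ 0 := by exact_mod_cast n.factorial_pos.ne'
              field_simp
      calc ‖p y₀ n‖ * ((τ.toNNReal : ℝ)) ^ n ≤ (D * δ ^ n) * τ ^ n := by
            rw [h1, hτc]
            apply mul_le_mul_of_nonneg_right h2 (by positivity)
        _ = D * (δ * τ) ^ n := by rw [mul_pow]; ring
        _ ≤ D * 1 := by
            apply mul_le_mul_of_nonneg_left _ hD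
            exact pow_le_one₀ (by positivity) hδτ.le
        _ = D := mul_one D
    have := FormalMultilinearSeries.le_radius_of_bound (p y₀) D hb
    rwa [ENNReal.ofReal]
  have hradpos : ∀ y₀ ∈ Γ, 0 < (p y₀).radius := fun y₀ h =>
    lt_of_lt_of_le (by simp [ENNReal.ofReal_pos, hτ0]) (hrad y₀ h)
  set G : ℝ → ℂ → B := fun y₀ z => (p y₀).sum (z - (y₀ : ℂ)) with hG
  have hGanal : ∀ y₀ ∈ Γ, ∀ z ∈ Metric.ball ((y₀ : ℂ)) τ, AnalyticAt ℂ (G y₀) z := by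
    intro y₀ hy₀ z hz
    have hmem : z - (y₀ : ℂ) ∈ Metric.eball (0 : ℂ) (p y₀).radius := by
      rw [Metric.mem_eball, edist_dist, dist_zero_right]
      calc ENNReal.ofReal ‖z - (y₀ : ℂ)‖ < ENNReal.ofReal τ := by
            rw [ENNReal.ofReal_lt_ofReal_iff hτ0]
            rw [Metric.mem_ball, Complex.dist_eq] at hz
            exact hz
        _ ≤ (p y₀).radius := hrad y₀ hy₀
    have h1 : AnalyticAt ℂ (p y₀).sum (z - (y₀ : ℂ)) :=
      ((p y₀).hasFPowerSeriesOnBall (hradpos y₀ hy₀)).analyticAt_of_mem hmem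
    have h2 : AnalyticAt ℂ (fun w : ℂ => w - (y₀ : ℂ)) z := analyticAt_id.sub analyticAt_const
    have h3 := AnalyticAt.comp (f := fun w : ℂ => w - (y₀ : ℂ)) h1 h2
    exact h3
  have hGval : ∀ y₀ ∈ Γ, ∀ y ∈ Γ, dist ((y : ℂ)) ((y₀ : ℂ)) < τ → G y₀ (y : ℂ) = f y := by
    intro y₀ hy₀ y hy hdist
    have hdistR : |y - y₀| < τ := by
      rwa [Complex.isometry_ofReal.dist_eq, Real.dist_eq] at hdist
    have hsum := taylor_hasSum_aux hΓ hf hD hδ hbound hτδ hy₀ hy hdistR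
    have hfun : (fun k : ℕ => (p y₀ k) fun _ => ((y : ℂ) - (y₀ : ℂ))) =
        (fun k : ℕ => (((k.factorial : ℝ))⁻¹ * (y - y₀) ^ k) • iteratedDerivWithin k f Γ y₀) := by
      funext k
      rw [hp]
      rw [ContinuousMultilinearMap.mkPiRing_apply, Finset.prod_const, Finset.card_fin]
      rw [← Complex.ofReal_sub, ← Complex.ofReal_pow, Complex.coe_smul, hd, smul_smul]
      ring_nf
    show (p y₀).sum ((y : ℂ) - (y₀ : ℂ)) = f y
    rw [FormalMultilinearSeries.sum, hfun]
    exact hsum.tsum_eq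
  have hGeqaux : ∀ y₀ ∈ Γ, ∀ y₁ ∈ Γ, y₀ < y₁ → ∀ z, z ∈ Metric.ball ((y₀ : ℂ)) τ →
      z ∈ Metric.ball ((y₁ : ℂ)) τ → G y₀ z = G y₁ z := by
    intro y₀ hy₀ y₁ hy₁ hlt z hz₀ hz₁
    set U : Set ℂ := Metric.ball ((y₀ : ℂ)) τ ∩ Metric.ball ((y₁ : ℂ)) τ with hU
    have hUanal₀ : AnalyticOnNhd ℂ (G y₀) U := fun w hw => hGanal y₀ hy₀ w hw.1
    have hUanal₁ : AnalyticOnNhd ℂ (G y₁) U := fun w hw => hGanal y₁ hy₁ w hw.2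
    have hpre : IsPreconnected U := ((convex_ball _ _).inter (convex_ball _ _)).isPreconnected
    set g : ℝ := y₁ - y₀ with hgdef
    have hg0 : 0 < g := sub_pos.2 hlt
    have hgap : g < 2 * τ := by
      have h1 : dist ((y₀ : ℂ)) ((y₁ : ℂ)) < 2 * τ := by
        calc dist ((y₀ : ℂ)) ((y₁ : ℂ)) ≤ dist ((y₀ : ℂ)) z + dist z ((y₁ : ℂ)) :=
              dist_triangle _ _ _
          _ < τ + τ := by
              rw [Metric.mem_ball] at hz₀ hz₁
              rw [dist_comm ((y₀ : ℂ)) z]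
              exact add_lt_add hz₀ hz₁
          _ = 2 * τ := by ring
      rwa [Complex.isometry_ofReal.dist_eq, Real.dist_eq, abs_of_nonpos (by linarith),
        neg_sub] at h1
    set m : ℝ := (y₀ + y₁) / 2 with hm
    have hmU : ((m : ℂ)) ∈ U := by
      constructor <;> rw [Metric.mem_ball, Complex.isometry_ofReal.dist_eq, Real.dist_eq]
      · rw [abs_of_nonneg (by rw [hm]; linarith)]
        rw [hm]; linarith
      · rw [abs_of_nonpos (by rw [hm]; linarith)]
        rw [hm]; linarith
    set c : ℝ := min (τ - g / 2) (g / 2) with hc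
    have hc0 : 0 < c := lt_min (by linarith) (by linarith)
    set x : ℕ → ℝ := fun n => m + c / (n + 2) with hx
    have hxprop : ∀ n : ℕ, x n ∈ Γ ∧ dist ((x n : ℂ)) ((y₀ : ℂ)) < τ ∧
        dist ((x n : ℂ)) ((y₁ : ℂ)) < τ ∧ x n ≠ m := by
      intro n
      have hn2 : (2 : ℝ) ≤ (n : ℝ) + 2 := by
        have : (0:ℝ) ≤ (n:ℝ) := Nat.cast_nonneg n
        linarith
      have hpos : 0 < c / ((n : ℝ) + 2) := by positivity
      have hle : c / ((n : ℝ) + 2) ≤ c / 2 := by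
        apply div_le_div_of_nonneg_left hc0.le (by norm_num) hn2
      have hcg : c ≤ g / 2 := min_le_right _ _
      have hcτ : c ≤ τ - g / 2 := min_le_left _ _
      have hxy₀ : y₀ < x n := by rw [hx, hm]; dsimp only; linarith
      have hxy₁ : x n < y₁ := by
        rw [hx, hm]; dsimp only
        have : c / ((n : ℝ) + 2) ≤ g / 4 := le_trans hle (by linarith)
        linarith
      refine ⟨hΓ.out hy₀ hy₁ ⟨hxy₀.le, hxy₁.le⟩, ?_, ?_, ?_⟩
      · rw [Complex.isometry_ofReal.dist_eq, Real.dist_eq, abs_of_nonneg (by linarith)]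
        have hlt2 : c / ((n : ℝ) + 2) < c := by
          calc c / ((n : ℝ) + 2) ≤ c / 2 := hle
            _ < c := by linarith
        rw [hx, hm]; dsimp only; linarith
      · rw [Complex.isometry_ofReal.dist_eq, Real.dist_eq, abs_of_nonpos (by linarith)]
        rw [hx, hm]; dsimp only; linarith
      · rw [hx]; dsimp only; intro hcon
        linarith
    have heq : ∀ n : ℕ, G y₀ ((x n : ℂ)) = G y₁ ((x n : ℂ)) := by
      intro n
      obtain ⟨hΓn, h0n, h1n, _⟩ := hxprop n
      rw [hGval y₀ hy₀ (x n) hΓn h0n, hGval y₁ hy₁ (x n) hΓn h1n]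
    have htend : Tendsto (fun n : ℕ => ((x n : ℂ))) atTop (𝓝[≠] ((m : ℂ))) := by
      rw [tendsto_nhdsWithin_iff]
      constructor
      · apply (Complex.continuous_ofReal.tendsto m).comp
        have hdiv : Tendsto (fun n : ℕ => c / ((n : ℝ) + 2)) atTop (𝓝 0) := by
          have := (tendsto_const_div_atTop_nhds_zero_nat c).comp (tendsto_add_atTop_nat 2)
          convert this using 2 with n
          simp only [Function.comp_apply]
          push_cast
          ring
        have := hdiv.const_add m
        rw [add_zero] at this
        exact this
      · apply Eventually.of_forall
        intro n
        have := (hxprop n).2.2.2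
        simpa [mem_compl_singleton_iff, Ne, Complex.ofReal_inj] using this
    have hfreq : ∃ᶠ w in 𝓝[≠] ((m : ℂ)), G y₀ w = G y₁ w :=
      htend.frequently (Frequently.of_forall heq)
    exact hUanal₀.eqOn_of_preconnected_of_frequently_eq hUanal₁ hpre hmU hfreq ⟨hz₀, hz₁⟩
  have hGeq : ∀ y₀ ∈ Γ, ∀ y₁ ∈ Γ, ∀ z, z ∈ Metric.ball ((y₀ : ℂ)) τ →
      z ∈ Metric.ball ((y₁ : ℂ)) τ → G y₀ z = G y₁ z := by
    intro y₀ h0 y₁ h1 z hz0 hz1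
    rcases lt_trichotomy y₀ y₁ with h | h | h
    · exact hGeqaux y₀ h0 y₁ h1 h z hz0 hz1
    · rw [h]
    · exact (hGeqaux y₁ h1 y₀ h0 h z hz1 hz0).symm
  set F : ℂ → B := fun z =>
    if h : ∃ y₀, y₀ ∈ Γ ∧ dist z ((y₀ : ℂ)) < τ then G h.choose z else 0 with hF
  refine ⟨F, ?_, ?_⟩
  · intro z hz
    simp only [mem_setOf_eq] at hz
    have hΓ'ne : (Complex.ofReal '' Γ).Nonempty := hΓne.image _
    obtain ⟨w, hwmem, hwd⟩ := (Metric.infDist_lt_iff hΓ'ne).mp hz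
    obtain ⟨y₀', hy₀'Γ, rfl⟩ := hwmem
    have hEx : ∃ y₀, y₀ ∈ Γ ∧ dist z ((y₀ : ℂ)) < τ := ⟨y₀', hy₀'Γ, hwd⟩
    obtain ⟨hy₀Γ, hy₀d⟩ := hEx.choose_spec
    have hloc : ∀ w' ∈ Metric.ball ((hEx.choose : ℂ)) τ, F w' = G hEx.choose w' := by
      intro w' hw'
      have hExw : ∃ y, y ∈ Γ ∧ dist w' ((y : ℂ)) < τ :=
        ⟨hEx.choose, hy₀Γ, by rwa [Metric.mem_ball] at hw'⟩
      rw [hF]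
      dsimp only
      rw [dif_pos hExw]
      exact hGeq hExw.choose hExw.choose_spec.1 hEx.choose hy₀Γ w'
        (Metric.mem_ball.2 hExw.choose_spec.2) hw'
    apply DifferentiableAt.differentiableWithinAt
    have hball : Metric.ball ((hEx.choose : ℂ)) τ ∈ 𝓝 z :=
      Metric.isOpen_ball.mem_nhds (Metric.mem_ball.2 hy₀d)
    have hGd : DifferentiableAt ℂ (G hEx.choose) z :=
      (hGanal hEx.choose hy₀Γ z (Metric.mem_ball.2 hy₀d)).differentiableAt
    exact hGd.congr_of_eventuallyEq (eventuallyEq_of_mem hball hloc)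
  · intro y hyΓ
    have hEx : ∃ y₀, y₀ ∈ Γ ∧ dist ((y : ℂ)) ((y₀ : ℂ)) < τ :=
      ⟨y, hyΓ, by simpa using hτ0⟩
    rw [hF]
    dsimp only
    rw [dif_pos hEx]
    exact hGval hEx.choose hEx.choose_spec.1 y hyΓ hEx.choose_spec.2
end

section
/- Let X be a real Banach space, T > 0, J = [0,T], Γ ⊆ ℝ^m equipped with a probability measure ρ, K̄ > 0, and P a bounded linear operator on X. For each y ∈ Γ let W(y) be a bounded linear operator on X with ‖P ∘ W(y)‖ ≤ K̄, let g(·,y) : J → X be continuous and v(y) ∈ X; let u(·,y) : J → X be differentiable with ∂_t u(t,y) = −u(t,y) + W(y) u(t,y) + g(t,y) and u(0,y) = v(y), and let u_n(·,y) : J → X be differentiable with ∂_t u_n(t,y) = P(−u_n(t,y) + W(y) u_n(t,y) + g(t,y)), u_n(0,y) = P v(y), and P u_n(t,y) = u_n(t,y) for all t. Assume the maps y ↦ sup_{t∈J}‖u(t,y) − u_n(t,y)‖_X and y ↦ sup_{t∈J}‖u(t,y) − P u(t,y)‖_X are measurable and square-integrable with respect to ρ. Then (∫_Γ sup_{t∈J}‖u(t,y)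 − u_n(t,y)‖_X² dρ(y))^{1/2} ≤ e^{K̄ T} · (∫_Γ sup_{t∈J}‖u(t,y) − P u(t,y)‖_X² dρ(y))^{1/2}. -/
open Set MeasureTheory

lemma pointwise_gronwall {X : Type*} [NormedAddCommGroup X] [NormedSpace ℝ X]
    (T Kbar : ℝ) (hT : 0 < T) (hK : 0 < Kbar)
    (P Wy : X →L[ℝ] X) (hPW : ‖P.comp Wy‖ ≤ Kbar)
    (g u un : ℝ → X) (v : X) (M : ℝ) (hM0 : 0 ≤ M)
    (hu : ∀ t ∈ Icc (0:ℝ) T, HasDerivAt u (-(u t) + Wy (u t) + g t) t)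
    (hu0 : u 0 = v)
    (hun : ∀ t ∈ Icc (0:ℝ) T, HasDerivAt un (P (-(un t) + Wy (un t) + g t)) t)
    (hun0 : un 0 = P v)
    (hPun : ∀ t ∈ Icc (0:ℝ) T, P (un t) = un t)
    (hMb : ∀ t ∈ Icc (0:ℝ) T, ‖u t - P (u t)‖ ≤ M) :
    ∀ t ∈ Icc (0:ℝ) T, ‖u t - un t‖ ≤ Real.exp (Kbar * T) * M := by
  set w : ℝ → X := fun t => P (u t) - un t with hwdef
  set D : ℝ → X := fun t =>
    P (-(u t) + Wy (u t) + g t) - P (-(un t) + Wy (un t) + g t) with hDdef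
  have hw' : ∀ t ∈ Icc (0:ℝ) T, HasDerivAt w (D t) t := fun t ht =>
    ((P.hasFDerivAt.comp_hasDerivAt t (hu t ht)).sub (hun t ht))
  have hkey : ∀ t ∈ Icc (0:ℝ) T, ‖w t + D t‖ ≤ Kbar * M + Kbar * ‖w t‖ := by
    intro t ht
    have heq : w t + D t = (P.comp Wy) (u t - un t) := by
      have h1 := hPun t ht
      simp only [hwdef, hDdef, map_add, map_neg, map_sub,
        ContinuousLinearMap.comp_apply, h1]
      abel
    rw [heq]
    have h2 : ‖u t - un t‖ ≤ M + ‖w t‖ := by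
      have h3 : u t - un t = (u t - P (u t)) + w t := by
        simp only [hwdef]; abel
      rw [h3]
      exact (norm_add_le _ _).trans (add_le_add (hMb t ht) le_rfl)
    calc ‖(P.comp Wy) (u t - un t)‖ ≤ ‖P.comp Wy‖ * ‖u t - un t‖ :=
          (P.comp Wy).le_opNorm _
      _ ≤ Kbar * (M + ‖w t‖) :=
          mul_le_mul hPW h2 (norm_nonneg _) hK.le
      _ = Kbar * M + Kbar * ‖w t‖ := by ring
  set F : ℝ → X := fun t => Real.exp t • w t with hFdef
  set F' : ℝ → X := fun t => Real.exp t • (w t + D t) with hF'def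
  have hF : ∀ t ∈ Icc (0:ℝ) T, HasDerivAt F (F' t) t := by
    intro t ht
    have := (Real.hasDerivAt_exp t).smul (hw' t ht)
    convert this using 1
    · rfl
    simp only [hF'def, smul_add]
    abel
  have hFnorm : ∀ t, ‖F t‖ = Real.exp t * ‖w t‖ := by
    intro t
    simp [hFdef, norm_smul, Real.abs_exp]
  have hF'norm : ∀ t ∈ Icc (0:ℝ) T,
      ‖F' t‖ ≤ Kbar * M * Real.exp t + Kbar * ‖F t‖ := by
    intro t ht
    have : ‖F' t‖ = Real.exp t * ‖w t + D t‖ := by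
      rw [show F' t = Real.exp t • (w t + D t) from rfl, norm_smul,
        Real.norm_eq_abs, Real.abs_exp]
    rw [this, hFnorm]
    have h := mul_le_mul_of_nonneg_left (hkey t ht) (Real.exp_pos t).le
    nlinarith [Real.exp_pos t]
  -- fencing with slack η
  have main : ∀ η : ℝ, 0 < η → ∀ t ∈ Icc (0:ℝ) T,
      ‖F t‖ ≤ M * (Real.exp ((Kbar+1)*t) - Real.exp t) + η * Real.exp ((Kbar+1)*t) := by
    intro η hη
    have hB : ∀ x : ℝ, HasDerivAt
        (fun t => M * (Real.exp ((Kbar+1)*t) - Real.exp t) + η * Real.exp ((Kbar+1)*t))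
        (M * ((Kbar+1) * Real.exp ((Kbar+1)*x) - Real.exp x)
          + η * ((Kbar+1) * Real.exp ((Kbar+1)*x))) x := by
      intro x
      have hE : HasDerivAt (fun t : ℝ => Real.exp ((Kbar+1)*t))
          (Real.exp ((Kbar+1)*x) * ((Kbar+1) * 1)) x :=
        ((hasDerivAt_id x).const_mul (Kbar+1)).exp
      have he : HasDerivAt Real.exp (Real.exp x) x := Real.hasDerivAt_exp x
      convert ((hE.sub he).const_mul M).add (hE.const_mul η) using 1
      · rfl
      · rfl
      · rfl
      · ring
    have hcontF : ContinuousOn F (Icc 0 T) := fun t ht =>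
      (hF t ht).continuousAt.continuousWithinAt
    have hF0 : ‖F 0‖ = 0 := by
      rw [hFnorm]
      simp [hwdef, hu0, hun0]
    intro t ht
    refine image_norm_le_of_norm_deriv_right_lt_deriv_boundary hcontF
      (fun x hx => (hF x (Ico_subset_Icc_self hx)).hasDerivWithinAt)
      ?_ hB ?_ ht
    · rw [hF0]
      simp only [mul_zero, Real.exp_zero, mul_one]
      nlinarith
    · intro x hx hEq
      have hxI : x ∈ Icc (0:ℝ) T := Ico_subset_Icc_self hx
      have h1 := hF'norm x hxI
      rw [hEq] at h1
      refine lt_of_le_of_lt h1 ?_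
      have hee : Real.exp x ≤ Real.exp ((Kbar+1)*x) := by
        apply Real.exp_le_exp.2
        nlinarith [hx.1]
      nlinarith [Real.exp_pos ((Kbar+1)*x), Real.exp_pos x]
  have hwle : ∀ t ∈ Icc (0:ℝ) T, ‖w t‖ ≤ M * (Real.exp (Kbar*t) - 1) := by
    intro t ht
    have h1 : ‖F t‖ ≤ M * (Real.exp ((Kbar+1)*t) - Real.exp t) := by
      refine le_of_forall_pos_le_add ?_
      intro ε hε
      have hpos := Real.exp_pos ((Kbar+1)*t)
      have := main (ε / Real.exp ((Kbar+1)*t)) (div_pos hε hpos) t ht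
      rwa [div_mul_cancel₀ _ hpos.ne'] at this
    rw [hFnorm] at h1
    have hsplit : Real.exp ((Kbar+1)*t) = Real.exp (Kbar*t) * Real.exp t := by
      rw [← Real.exp_add]; ring_nf
    rw [hsplit] at h1
    have hpt := Real.exp_pos t
    nlinarith
  intro t ht
  have h2 : u t - un t = (u t - P (u t)) + w t := by simp only [hwdef]; abel
  have h3 : ‖u t - un t‖ ≤ M + M * (Real.exp (Kbar*t) - 1) := by
    rw [h2]
    exact (norm_add_le _ _).trans (add_le_add (hMb t ht) (hwle t ht))
  have h4 : Real.exp (Kbar*t) ≤ Real.exp (Kbar*T) := by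
    apply Real.exp_le_exp.2
    nlinarith [ht.2]
  nlinarith

/-- Spatial-projection part of the total error bound, in the `L²_ρ(Γ) ⊗ C⁰(J,X)` norm:
if for each random parameter `y ∈ Γ ⊆ ℝ^m`, `u(·,y)` solves the linear neural field
equation and `uₙ(·,y)` solves the projected equation with projector `P`, and
`‖P ∘ W(y)‖ ≤ K̄`, then
`(∫_Γ sup_t ‖u − uₙ‖² dρ)^{1/2} ≤ e^{K̄T} (∫_Γ sup_t ‖u − Pu‖² dρ)^{1/2}`. -/
theorem total_error_spatial_part
    {X : Type*} [NormedAddCommGroup X] [NormedSpace ℝ X]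
    {m : ℕ} (Γ : Set (Fin m → ℝ))
    (ρ : Measure Γ) [IsProbabilityMeasure ρ]
    (T : ℝ) (hT : 0 < T) (Kbar : ℝ) (hK : 0 < Kbar)
    (P : X →L[ℝ] X) (W : Γ → X →L[ℝ] X)
    (g : ℝ → Γ → X) (v : Γ → X) (u un : ℝ → Γ → X)
    (hW : ∀ y : Γ, ‖P.comp (W y)‖ ≤ Kbar)
    (hg : ∀ y : Γ, ContinuousOn (fun t => g t y) (Icc 0 T))
    (hu : ∀ y : Γ, ∀ t ∈ Icc (0 : ℝ) T,
      HasDerivAt (fun t => u t y) (-(u t y) + W y (u t y) + g t y) t)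
    (hu0 : ∀ y : Γ, u 0 y = v y)
    (hun : ∀ y : Γ, ∀ t ∈ Icc (0 : ℝ) T,
      HasDerivAt (fun t => un t y) (P (-(un t y) + W y (un t y) + g t y)) t)
    (hun0 : ∀ y : Γ, un 0 y = P (v y))
    (hPun : ∀ y : Γ, ∀ t ∈ Icc (0 : ℝ) T, P (un t y) = un t y)
    (hmeas1 : MemLp (fun y : Γ => ⨆ t : Icc (0 : ℝ) T, ‖u t y - un t y‖) 2 ρ)
    (hmeas2 : MemLp (fun y : Γ => ⨆ t : Icc (0 : ℝ) T, ‖u t y - P (u t y)‖) 2 ρ) :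
    Real.sqrt (∫ y, (⨆ t : Icc (0 : ℝ) T, ‖u t y - un t y‖) ^ 2 ∂ρ) ≤
      Real.exp (Kbar * T) *
        Real.sqrt (∫ y, (⨆ t : Icc (0 : ℝ) T, ‖u t y - P (u t y)‖) ^ 2 ∂ρ) := by
  set a : Γ → ℝ := fun y => ⨆ t : Icc (0:ℝ) T, ‖u t y - un t y‖ with hadef
  set b : Γ → ℝ := fun y => ⨆ t : Icc (0:ℝ) T, ‖u t y - P (u t y)‖ with hbdef
  have hIcc : Nonempty (Icc (0:ℝ) T) := ⟨⟨0, le_refl 0, hT.le⟩⟩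
  have hb0 : ∀ y, 0 ≤ b y := fun y => Real.iSup_nonneg fun t => norm_nonneg _
  have ha0 : ∀ y, 0 ≤ a y := fun y => Real.iSup_nonneg fun t => norm_nonneg _
  have hbub : ∀ y : Γ, ∀ t ∈ Icc (0:ℝ) T, ‖u t y - P (u t y)‖ ≤ b y := by
    intro y t ht
    have hcu : ContinuousOn (fun t => u t y) (Icc 0 T) := fun s hs =>
      (hu y s hs).continuousAt.continuousWithinAt
    have hcont : ContinuousOn (fun t => ‖u t y - P (u t y)‖) (Icc 0 T) :=
      (hcu.sub (P.continuous.comp_continuousOn hcu)).norm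
    have hbdd := (isCompact_Icc.image_of_continuousOn hcont).bddAbove
    rw [← Set.range_restrict] at hbdd
    exact le_ciSup hbdd (⟨t, ht⟩ : Icc (0:ℝ) T)
  have hab : ∀ y, a y ≤ Real.exp (Kbar*T) * b y := by
    intro y
    apply ciSup_le
    intro t
    exact pointwise_gronwall T Kbar hT hK P (W y) (hW y) (fun s => g s y)
      (fun s => u s y) (fun s => un s y) (v y) (b y) (hb0 y) (hu y) (hu0 y)
      (hun y) (hun0 y) (hPun y) (hbub y) t t.2
  have hInt1 : Integrable (fun y => a y ^ 2) ρ := hmeas1.integrable_sq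
  have hInt2 : Integrable (fun y => Real.exp (Kbar*T) ^ 2 * b y ^ 2) ρ :=
    hmeas2.integrable_sq.const_mul _
  have hmono : ∫ y, a y ^ 2 ∂ρ ≤ ∫ y, Real.exp (Kbar*T) ^ 2 * b y ^ 2 ∂ρ := by
    apply integral_mono hInt1 hInt2
    intro y
    have h1 := hab y
    have h2 := ha0 y
    have h3 := hb0 y
    have h4 := Real.exp_pos (Kbar*T)
    simp only
    nlinarith
  calc Real.sqrt (∫ y, a y ^ 2 ∂ρ)
      ≤ Real.sqrt (∫ y, Real.exp (Kbar*T) ^ 2 * b y ^ 2 ∂ρ) := Real.sqrt_le_sqrt hmono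
    _ = Real.exp (Kbar*T) * Real.sqrt (∫ y, b y ^ 2 ∂ρ) := by
        rw [integral_const_mul, Real.sqrt_mul (sq_nonneg _),
          Real.sqrt_sq (Real.exp_pos _).le]
end

section
/- Let X = C([−1,1],ℝ) with the supremum norm, let r ≥ 1 be an integer, c₀ > 0, and let P be a bounded linear operator on X satisfying the Jackson-type bound ‖P w − w‖_∞ ≤ c₀ · sup_{x∈[−1,1]} |w^{(r)}(x)| for every w ∈ C^r([−1,1]). Let Γ ⊆ ℝ be open and v : Γ × [−1,1] → ℝ be such that for each y ∈ Γ and each k ≥ 0 the function x ↦ ∂_y^k v(x,y) is r times continuously differentiable with ∂_x^r ∂_y^k v = ∂_y^k ∂_x^r v, and suppose there exist μ₀, μ_r > 0 such that for all y ∈ Γ and all k ≥ 1: sup_x |∂_y^k v(x,y)| ≤ (1 + sup_x |v(x,y)|) · k! · μ₀^k and sup_x |∂_y^k ∂_x^r v(x,y)| ≤ (1 + sup_x |∂_x^r v(x,y)|) · k! · μ_r^k. Then, setting K(y) = c₀·(1 + sup_x |∂_x^r v(x,y)|) + (1 + sup_x |v(x,y)|) and γ = max(μ₀, μ_r), one has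 ‖P ∂_y^k v(·,y)‖_∞ ≤ K(y) · k! · γ^k for all y ∈ Γ and all integers k ≥ 0. -/
open Set

/-- Projected-data analyticity bounds from a Jackson-type estimate: if the projector `P`
on `X = C([−1,1],ℝ)` satisfies `‖Pw − w‖_∞ ≤ c₀ sup_x |w^{(r)}(x)|` for `r`-times
continuously differentiable `w`, and the data `v(y,x)` satisfies factorial-geometric
`y`-derivative bounds (with constants `μ₀` for `v` and `μ_r` for `∂_x^r v`), then
`‖P ∂_y^k v(·,y)‖_∞ ≤ K(y) k! γ^k` with
`K(y) = c₀(1 + sup_x |∂_x^r v|) + (1 + sup_x |v|)` and `γ = max(μ₀, μ_r)`. -/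
theorem projected_data_bound_from_jackson
    (r : ℕ) (hr : 1 ≤ r) (c₀ : ℝ) (hc₀ : 0 < c₀)
    (P : C(Icc (-1 : ℝ) 1, ℝ) →L[ℝ] C(Icc (-1 : ℝ) 1, ℝ))
    (hJackson : ∀ (w : C(Icc (-1 : ℝ) 1, ℝ)) (w' : ℝ → ℝ),
      ContDiffOn ℝ (r : ℕ∞) w' (Icc (-1 : ℝ) 1) →
      (∀ x : Icc (-1 : ℝ) 1, w x = w' x) →
      ‖P w - w‖ ≤ c₀ * ⨆ x : Icc (-1 : ℝ) 1,
        |iteratedDerivWithin r w' (Icc (-1 : ℝ) 1) x|)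
    (Γ : Set ℝ) (hΓ : IsOpen Γ)
    (v : ℝ → ℝ → ℝ)
    (hvy : ∀ x ∈ Icc (-1 : ℝ) 1, ContDiffOn ℝ (⊤ : ℕ∞) (fun y => v y x) Γ)
    (hvx : ∀ y ∈ Γ, ∀ k : ℕ,
      ContDiffOn ℝ (r : ℕ∞) (fun x => iteratedDeriv k (fun y' => v y' x) y)
        (Icc (-1 : ℝ) 1))
    (hswap : ∀ y ∈ Γ, ∀ k : ℕ, ∀ x ∈ Icc (-1 : ℝ) 1,
      iteratedDerivWithin r (fun x' => iteratedDeriv k (fun y' => v y' x') y)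
          (Icc (-1 : ℝ) 1) x =
        iteratedDeriv k
          (fun y' => iteratedDerivWithin r (fun x' => v y' x') (Icc (-1 : ℝ) 1) x) y)
    (μ₀ μr : ℝ) (hμ₀ : 0 < μ₀) (hμr : 0 < μr)
    (hbound₀ : ∀ y ∈ Γ, ∀ k : ℕ, 1 ≤ k →
      (⨆ x : Icc (-1 : ℝ) 1, |iteratedDeriv k (fun y' => v y' x) y|) ≤
        (1 + ⨆ x : Icc (-1 : ℝ) 1, |v y x|) * (Nat.factorial k) * μ₀ ^ k)
    (hboundr : ∀ y ∈ Γ, ∀ k : ℕ, 1 ≤ k →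
      (⨆ x : Icc (-1 : ℝ) 1,
        |iteratedDeriv k
          (fun y' => iteratedDerivWithin r (fun x' => v y' x') (Icc (-1 : ℝ) 1) x) y|) ≤
        (1 + ⨆ x : Icc (-1 : ℝ) 1,
            |iteratedDerivWithin r (fun x' => v y x') (Icc (-1 : ℝ) 1) x|) *
          (Nat.factorial k) * μr ^ k) :
    ∀ y ∈ Γ, ∀ k : ℕ, ∀ w : C(Icc (-1 : ℝ) 1, ℝ),
      (∀ x : Icc (-1 : ℝ) 1, w x = iteratedDeriv k (fun y' => v y' x) y) →
      ‖P w‖ ≤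
        (c₀ * (1 + ⨆ x : Icc (-1 : ℝ) 1,
            |iteratedDerivWithin r (fun x' => v y x') (Icc (-1 : ℝ) 1) x|) +
          (1 + ⨆ x : Icc (-1 : ℝ) 1, |v y x|)) *
          (Nat.factorial k) * (max μ₀ μr) ^ k := by
  intro y hy k w hw
  haveI hne : Nonempty (Icc (-1:ℝ) 1) := ⟨⟨0, by norm_num⟩⟩
  set S0 := ⨆ x : Icc (-1:ℝ) 1, |v y x| with hS0def
  set Sr := ⨆ x : Icc (-1:ℝ) 1,
      |iteratedDerivWithin r (fun x' => v y x') (Icc (-1:ℝ) 1) x| with hSrdef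
  have hS0nn : 0 ≤ S0 := Real.iSup_nonneg fun x => abs_nonneg _
  have hSrnn : 0 ≤ Sr := Real.iSup_nonneg fun x => abs_nonneg _
  have hwnorm : ‖w‖ = ⨆ x : Icc (-1:ℝ) 1, |iteratedDeriv k (fun y' => v y' x) y| := by
    rw [ContinuousMap.norm_eq_iSup_norm]
    congr 1; funext x; rw [hw x, Real.norm_eq_abs]
  have hsup : (⨆ x : Icc (-1:ℝ) 1,
      |iteratedDerivWithin r (fun x' => iteratedDeriv k (fun y' => v y' x') y)
        (Icc (-1:ℝ) 1) x|)
      = ⨆ x : Icc (-1:ℝ) 1,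
      |iteratedDeriv k
        (fun y' => iteratedDerivWithin r (fun x' => v y' x') (Icc (-1:ℝ) 1) x) y| := by
    congr 1; funext x; rw [hswap y hy k x x.2]
  have hA : ‖P w - w‖ ≤ c₀ * ⨆ x : Icc (-1:ℝ) 1,
      |iteratedDeriv k
        (fun y' => iteratedDerivWithin r (fun x' => v y' x') (Icc (-1:ℝ) 1) x) y| := by
    have := hJackson w (fun x => iteratedDeriv k (fun y' => v y' x) y) (hvx y hy k) hw
    rwa [hsup] at this
  have htri : ‖P w‖ ≤ ‖P w - w‖ + ‖w‖ := by
    have := norm_add_le (P w - w) w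
    simpa using this
  have hkfac : (1:ℝ) ≤ (Nat.factorial k : ℝ) := by
    exact_mod_cast Nat.one_le_iff_ne_zero.mpr (Nat.factorial_ne_zero k)
  have hγnn : 0 ≤ max μ₀ μr := le_trans hμ₀.le (le_max_left _ _)
  rcases Nat.eq_zero_or_pos k with hk | hk
  · subst hk
    have hAsub : (⨆ x : Icc (-1:ℝ) 1,
        |iteratedDeriv 0
          (fun y' => iteratedDerivWithin r (fun x' => v y' x') (Icc (-1:ℝ) 1) x) y|)
        = Sr := by
      simp [iteratedDeriv_zero, hSrdef]
    have hBsub : ‖w‖ = S0 := by rw [hwnorm]; simp [iteratedDeriv_zero, hS0def]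
    rw [hAsub] at hA
    have : ‖P w‖ ≤ c₀ * Sr + S0 := by linarith [htri, hBsub ▸ le_refl ‖w‖]
    calc ‖P w‖ ≤ c₀ * Sr + S0 := by linarith [hBsub.le, hBsub.ge]
      _ ≤ (c₀ * (1 + Sr) + (1 + S0)) * 1 * 1 := by nlinarith
      _ = (c₀ * (1 + Sr) + (1 + S0)) * (Nat.factorial 0) * (max μ₀ μr) ^ 0 := by
          simp
  · have hμ0γ : μ₀ ^ k ≤ (max μ₀ μr) ^ k := pow_le_pow_left₀ hμ₀.le (le_max_left _ _) k
    have hμrγ : μr ^ k ≤ (max μ₀ μr) ^ k := pow_le_pow_left₀ hμr.le (le_max_right _ _) k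
    have hγpow : 0 ≤ (max μ₀ μr) ^ k := pow_nonneg hγnn k
    have hB : ‖w‖ ≤ (1 + S0) * (Nat.factorial k) * (max μ₀ μr) ^ k := by
      rw [hwnorm]
      refine le_trans (hbound₀ y hy k hk) ?_
      have h1 : 0 ≤ (1 + S0) * (Nat.factorial k : ℝ) := by positivity
      exact mul_le_mul_of_nonneg_left hμ0γ h1
    have hA' : ‖P w - w‖ ≤ c₀ * ((1 + Sr) * (Nat.factorial k) * (max μ₀ μr) ^ k) := by
      refine le_trans hA (mul_le_mul_of_nonneg_left ?_ hc₀.le)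
      refine le_trans (hboundr y hy k hk) ?_
      have h1 : 0 ≤ (1 + Sr) * (Nat.factorial k : ℝ) := by positivity
      exact mul_le_mul_of_nonneg_left hμrγ h1
    calc ‖P w‖ ≤ ‖P w - w‖ + ‖w‖ := htri
      _ ≤ c₀ * ((1 + Sr) * (Nat.factorial k) * (max μ₀ μr) ^ k)
          + (1 + S0) * (Nat.factorial k) * (max μ₀ μr) ^ k := add_le_add hA' hB
      _ = (c₀ * (1 + Sr) + (1 + S0)) * (Nat.factorial k) * (max μ₀ μr) ^ k := by ring
end
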